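/- arXiv:2408.09693 — 5 statements merged into one kernel-verified Lean document; each statement's English description precedes it below -/
import Mathlib

section
/- For every initial value γ₀ ≥ 0 there exists a unique continuously differentiable function γ⁰ : [0,∞) → ℝ with γ⁰(0) = γ₀ and (γ⁰)'(t) = f(γ⁰(t),0) for all t ≥ 0; this solution satisfies 0 ≤ γ⁰(t) ≤ max{γ∞⁰, γ₀} for all t ≥ 0, and γ⁰(t) → γ∞⁰ as t → ∞. -/
open Set

/-- Uniqueness for the quadratic ODE via Grönwall. -/
lemma quad_ode_unique (a lam c : ℝ) (ha : 0 < a) (hlam : 0 ≤ lam)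
    (F : ℝ → ℝ) (hF : ∀ x, F x = -a * x ^ 2 - 2 * lam * x + c)
    (g₁ g₂ : ℝ → ℝ) (h0 : g₁ 0 = g₂ 0)
    (h1d : ∀ t ∈ Set.Ici (0 : ℝ), HasDerivWithinAt g₁ (F (g₁ t)) (Set.Ici 0) t)
    (h2d : ∀ t ∈ Set.Ici (0 : ℝ), HasDerivWithinAt g₂ (F (g₂ t)) (Set.Ici 0) t) :
    Set.EqOn g₁ g₂ (Set.Ici 0) := by
  intro T hT
  simp only [Set.mem_Ici] at hT
  have hsub : Icc (0:ℝ) T ⊆ Ici 0 := fun x hx => hx.1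
  have hc1 : ContinuousOn g₁ (Icc 0 T) := fun x hx =>
    ((h1d x (hsub hx)).continuousWithinAt).mono hsub
  have hc2 : ContinuousOn g₂ (Icc 0 T) := fun x hx =>
    ((h2d x (hsub hx)).continuousWithinAt).mono hsub
  obtain ⟨M₁, hM₁⟩ := (isCompact_Icc : IsCompact (Icc (0:ℝ) T)).exists_bound_of_continuousOn hc1
  obtain ⟨M₂, hM₂⟩ := (isCompact_Icc : IsCompact (Icc (0:ℝ) T)).exists_bound_of_continuousOn hc2
  set M : ℝ := max M₁ M₂ with hM
  set K : ℝ := 2 * a * M + 2 * lam with hK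
  have key : ∀ x ∈ Icc (0:ℝ) T, ‖g₁ x - g₂ x‖ ≤ gronwallBound 0 K 0 (x - 0) := by
    apply norm_le_gronwallBound_of_norm_deriv_right_le
      (f' := fun x => F (g₁ x) - F (g₂ x)) (hc1.sub hc2)
    · intro x hx
      have hx0 : x ∈ Ici (0:ℝ) := hx.1
      exact ((h1d x hx0).sub (h2d x hx0)).mono (Set.Ici_subset_Ici.mpr hx.1)
    · simp [h0]
    · intro x hx
      have hxI : x ∈ Icc (0:ℝ) T := ⟨hx.1, hx.2.le⟩
      have hb1 : |g₁ x| ≤ M := le_trans (hM₁ x hxI) (le_max_left _ _)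
      have hb2 : |g₂ x| ≤ M := le_trans (hM₂ x hxI) (le_max_right _ _)
      have habs1 : -M ≤ g₁ x ∧ g₁ x ≤ M := abs_le.mp hb1
      have habs2 : -M ≤ g₂ x ∧ g₂ x ≤ M := abs_le.mp hb2
      have hFd : F (g₁ x) - F (g₂ x) = -(a * (g₁ x + g₂ x) + 2 * lam) * (g₁ x - g₂ x) := by
        rw [hF, hF]; ring
      have : ‖F (g₁ x) - F (g₂ x)‖ ≤ K * ‖g₁ x - g₂ x‖ := by
        rw [hFd, Real.norm_eq_abs, Real.norm_eq_abs, abs_mul]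
        apply mul_le_mul_of_nonneg_right _ (abs_nonneg _)
        rw [abs_neg]
        have : |a * (g₁ x + g₂ x) + 2 * lam| ≤ a * (2 * M) + 2 * lam := by
          have := abs_nonneg (g₁ x - g₂ x)
          rw [abs_le]
          constructor <;> nlinarith [habs1.1, habs1.2, habs2.1, habs2.2, ha.le]
        linarith [this]
      simpa using this
  have := key T ⟨hT, le_refl T⟩
  rw [gronwallBound_ε0, zero_mul] at this
  have h0' : ‖g₁ T - g₂ T‖ ≤ 0 := by simpa using this
  exact sub_eq_zero.mp (norm_le_zero_iff.mp h0')

open Set Filter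

/-- Degenerate case: F x = -a x². -/
lemma deg_exists (a : ℝ) (ha : 0 < a) (F : ℝ → ℝ) (hF : ∀ x, F x = -a * x ^ 2)
    (γ₀ : ℝ) (hγ₀ : 0 ≤ γ₀) :
    ∃ g : ℝ → ℝ, g 0 = γ₀ ∧
      (∀ t ∈ Set.Ici (0 : ℝ), HasDerivWithinAt g (F (g t)) (Set.Ici 0) t) ∧
      (∀ t ∈ Set.Ici (0 : ℝ), 0 ≤ g t ∧ g t ≤ γ₀) ∧
      Filter.Tendsto g Filter.atTop (nhds 0) := by
  set D : ℝ → ℝ := fun t => 1 + a * γ₀ * t with hD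
  refine ⟨fun t => γ₀ / D t, ?_, ?_, ?_, ?_⟩
  · simp [hD]
  · intro t ht
    simp only [Set.mem_Ici] at ht
    have hD1 : 1 ≤ D t := by
      have : 0 ≤ a * γ₀ * t := by positivity
      simp only [hD]; linarith
    have hDne : D t ≠ 0 := by linarith
    have hDd : HasDerivAt D (a * γ₀) t := by
      have h := ((hasDerivAt_id' t).const_mul (a * γ₀)).const_add 1
      rw [mul_one] at h; exact h
    have hg : HasDerivAt (fun t => γ₀ / D t)
        ((0 * D t - γ₀ * (a * γ₀)) / D t ^ 2) t :=
      (hasDerivAt_const t γ₀).div hDd hDne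
    have heq : (0 * D t - γ₀ * (a * γ₀)) / D t ^ 2 = F (γ₀ / D t) := by
      rw [hF]; field_simp; ring
    exact (heq ▸ hg).hasDerivWithinAt
  · intro t ht
    simp only [Set.mem_Ici] at ht
    have hD1 : 1 ≤ D t := by
      have : 0 ≤ a * γ₀ * t := by positivity
      simp only [hD]; linarith
    constructor
    · positivity
    · exact div_le_self hγ₀ hD1
  · rcases hγ₀.eq_or_lt with h | h
    · simpa [hD, ← h] using tendsto_const_nhds
    · have hDtop : Tendsto D atTop atTop := by
        apply Filter.tendsto_atTop_add_const_left
        exact Tendsto.const_mul_atTop (by positivity) tendsto_id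
      simpa using Filter.Tendsto.div_atTop (tendsto_const_nhds (x := γ₀)) hDtop

/-- Main case of the Riccati ODE with distinct roots r > rm. -/
lemma riccati_exists (a lam c s r rm : ℝ) (ha : 0 < a) (hlam : 0 ≤ lam) (hs : 0 < s)
    (hr2s : r - rm = 2 * s) (hsum : a * (r + rm) = -2 * lam) (hprod : -(a * (r * rm)) = c)
    (hr0 : 0 ≤ r)
    (F : ℝ → ℝ) (hF : ∀ x, F x = -a * x ^ 2 - 2 * lam * x + c)
    (γ₀ : ℝ) (hγ₀ : 0 ≤ γ₀) (hγrm : rm < γ₀) :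
    ∃ g : ℝ → ℝ, g 0 = γ₀ ∧
      (∀ t ∈ Set.Ici (0 : ℝ), HasDerivWithinAt g (F (g t)) (Set.Ici 0) t) ∧
      (∀ t ∈ Set.Ici (0 : ℝ), 0 ≤ g t ∧ g t ≤ max r γ₀) ∧
      Filter.Tendsto g Filter.atTop (nhds r) := by
  have hrm : r - rm > 0 := by linarith
  have hγrm' : γ₀ - rm > 0 := by linarith
  set K : ℝ := (γ₀ - r) / (γ₀ - rm) with hK
  have hK1 : K < 1 := by
    rw [hK, div_lt_one hγrm']; linarith
  set u : ℝ → ℝ := fun t => Real.exp (-(2 * a * s) * t) with hu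
  set D : ℝ → ℝ := fun t => 1 - K * u t with hDdef
  have hupos : ∀ t, 0 < u t := fun t => Real.exp_pos _
  have hule : ∀ t, 0 ≤ t → u t ≤ 1 := by
    intro t ht
    rw [hu]
    apply Real.exp_le_one_iff.mpr
    have : 0 ≤ 2 * a * s * t := by positivity
    linarith
  have hDpos : ∀ t, 0 ≤ t → 0 < D t := by
    intro t ht
    rcases le_or_gt K 0 with h | h
    · have : K * u t ≤ 0 := mul_nonpos_of_nonpos_of_nonneg h (hupos t).le
      simp only [hDdef]; linarith
    · have : K * u t ≤ K := by
        nlinarith [hule t ht, (hupos t).le]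
      simp only [hDdef]; linarith
  set g : ℝ → ℝ := fun t => rm + (r - rm) / D t with hg
  have hg0 : g 0 = γ₀ := by
    have hu0 : u 0 = 1 := by simp [hu]
    have h1K : (1:ℝ) - K ≠ 0 := by linarith
    simp only [hg, hDdef, hu0, mul_one, hK]
    have hne1 : γ₀ - rm ≠ 0 := ne_of_gt hγrm'
    have hne2 : r - rm ≠ 0 := ne_of_gt hrm
    have e : 1 - (γ₀ - r) / (γ₀ - rm) = (r - rm) / (γ₀ - rm) := by field_simp; ring
    rw [e]; field_simp; ring
  refine ⟨g, hg0, ?_, ?_, ?_⟩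
  · intro t ht
    simp only [Set.mem_Ici] at ht
    have hDt := hDpos t ht
    have hDne : D t ≠ 0 := ne_of_gt hDt
    have hud : HasDerivAt u (u t * (-(2 * a * s))) t := by
      have h1 : HasDerivAt (fun x : ℝ => -(2 * a * s) * x) (-(2 * a * s)) t := by
        simpa using (hasDerivAt_id t).const_mul (-(2 * a * s))
      exact (Real.hasDerivAt_exp _).comp t h1
    have hDd : HasDerivAt D (-(K * (u t * (-(2 * a * s))))) t := by
      simpa using (hud.const_mul K).const_sub 1
    have hgd : HasDerivAt g
        ((0 * D t - (r - rm) * (-(K * (u t * (-(2 * a * s)))))) / D t ^ 2) t :=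
      ((hasDerivAt_const t (r - rm)).div hDd hDne).const_add rm
    have e1 : g t - r = (r - rm) * (K * u t) / D t := by
      simp only [hg, hDdef] at *
      field_simp
      ring
    have e2 : g t - rm = (r - rm) / D t := by
      simp only [hg]; ring
    have e3 : F (g t) = -a * ((g t - r) * (g t - rm)) := by
      rw [hF]; linear_combination (-(g t)) * hsum - hprod
    rw [e1, e2] at e3
    have heq : (0 * D t - (r - rm) * (-(K * (u t * (-(2 * a * s)))))) / D t ^ 2
        = F (g t) := by
      rw [e3, hr2s]
      field_simp
      ring
    exact (heq ▸ hgd).hasDerivWithinAt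
  · intro t ht
    simp only [Set.mem_Ici] at ht
    have hDt := hDpos t ht
    have hDne : D t ≠ 0 := ne_of_gt hDt
    have h1K : (0:ℝ) < 1 - K := by linarith
    have hgr : g t - r = (r - rm) * (K * u t) / D t := by
      simp only [hg, hDdef] at *
      field_simp
      ring
    have hgγ : g t - γ₀ = (r - rm) * (K * (u t - 1)) / (D t * (1 - K)) := by
      have hγeq : γ₀ = rm + (r - rm) / (1 - K) := by
        rw [hK]
        have hne1 : γ₀ - rm ≠ 0 := ne_of_gt hγrm'
        have hne2 : r - rm ≠ 0 := ne_of_gt hrm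
        have e : 1 - (γ₀ - r) / (γ₀ - rm) = (r - rm) / (γ₀ - rm) := by field_simp; ring
        rw [e]; field_simp; ring
      simp only [hg, hDdef] at *
      rw [hγeq]
      field_simp
      try ring
    have hu1 := hule t ht
    have hup := hupos t
    rcases le_or_gt K 0 with h | h
    · have h1 : g t - r ≤ 0 := by
        rw [hgr]
        exact div_nonpos_of_nonpos_of_nonneg
          (mul_nonpos_of_nonneg_of_nonpos hrm.le
            (mul_nonpos_of_nonpos_of_nonneg h hup.le)) hDt.le
      have h2 : 0 ≤ g t - γ₀ := by
        rw [hgγ]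
        exact div_nonneg
          (mul_nonneg hrm.le (by nlinarith : (0:ℝ) ≤ K * (u t - 1)))
          (by positivity)
      exact ⟨by linarith, le_trans (by linarith) (le_max_left _ _)⟩
    · have h1 : 0 ≤ g t - r := by
        rw [hgr]
        exact div_nonneg (mul_nonneg hrm.le (mul_nonneg h.le hup.le)) hDt.le
      have h2 : g t - γ₀ ≤ 0 := by
        rw [hgγ]
        exact div_nonpos_of_nonpos_of_nonneg
          (mul_nonpos_of_nonneg_of_nonpos hrm.le
            (mul_nonpos_of_nonneg_of_nonpos h.le (by linarith))) (by positivity)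
      exact ⟨by linarith, le_trans (by linarith) (le_max_right _ _)⟩
  · have hutop : Tendsto u atTop (nhds 0) := by
      rw [hu]
      apply Real.tendsto_exp_atBot.comp
      exact Tendsto.const_mul_atTop_of_neg (by nlinarith) tendsto_id
    have : Tendsto g atTop (nhds (rm + (r - rm) / (1 - K * 0))) := by
      apply Tendsto.const_add
      apply Tendsto.div tendsto_const_nhds
      · exact Tendsto.const_sub 1 (Tendsto.const_mul K hutop)
      · norm_num
    simpa using this

/-- Existence, uniqueness, bounds and long-time convergence for the
uncontrolled conditional variance ODE γ' = f(γ,0), γ(0) = γ₀ ≥ 0. -/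
theorem stmt_1 (σ₁ σ₂ lam : ℝ) (hσ₁ : 0 < σ₁) (hσ₂ : 0 ≤ σ₂) (hlam : 0 ≤ lam)
    (f : ℝ → ℝ → ℝ)
    (hf : ∀ γ h : ℝ, f γ h = -(1 / σ₁ ^ 2 + h) * γ ^ 2 - 2 * lam * γ + σ₂ ^ 2)
    (γinf : ℝ)
    (hγinf : γinf = -lam * σ₁ ^ 2 + Real.sqrt (lam ^ 2 * σ₁ ^ 4 + σ₁ ^ 2 * σ₂ ^ 2))
    (γ₀ : ℝ) (hγ₀ : 0 ≤ γ₀) :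
    (∃ g : ℝ → ℝ,
      (g 0 = γ₀ ∧ ∀ t ∈ Set.Ici (0 : ℝ), HasDerivWithinAt g (f (g t) 0) (Set.Ici 0) t) ∧
      (∀ t ∈ Set.Ici (0 : ℝ), 0 ≤ g t ∧ g t ≤ max γinf γ₀) ∧
      Filter.Tendsto g Filter.atTop (nhds γinf)) ∧
    (∀ g₁ g₂ : ℝ → ℝ,
      (g₁ 0 = γ₀ ∧ ∀ t ∈ Set.Ici (0 : ℝ), HasDerivWithinAt g₁ (f (g₁ t) 0) (Set.Ici 0) t) →
      (g₂ 0 = γ₀ ∧ ∀ t ∈ Set.Ici (0 : ℝ), HasDerivWithinAt g₂ (f (g₂ t) 0) (Set.Ici 0) t) →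
      Set.EqOn g₁ g₂ (Set.Ici 0)) := by
  have hσ₁2 : (0:ℝ) < σ₁ ^ 2 := by positivity
  set a : ℝ := 1 / σ₁ ^ 2 with ha_def
  have ha : 0 < a := by positivity
  set F : ℝ → ℝ := fun x => f x 0 with hFdef
  have hF : ∀ x, F x = -a * x ^ 2 - 2 * lam * x + σ₂ ^ 2 := by
    intro x; simp only [hFdef, hf]; ring
  constructor
  · -- existence
    have harg : (0:ℝ) ≤ lam ^ 2 * σ₁ ^ 4 + σ₁ ^ 2 * σ₂ ^ 2 := by positivity
    set s : ℝ := Real.sqrt (lam ^ 2 * σ₁ ^ 4 + σ₁ ^ 2 * σ₂ ^ 2) with hs_def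
    have hs0 : 0 ≤ s := Real.sqrt_nonneg _
    have hs2 : s ^ 2 = lam ^ 2 * σ₁ ^ 4 + σ₁ ^ 2 * σ₂ ^ 2 := Real.sq_sqrt harg
    rcases hs0.eq_or_lt with hs | hs
    · -- degenerate: s = 0 hence lam = 0, σ₂ = 0, γinf = 0
      have h0 : lam ^ 2 * σ₁ ^ 4 + σ₁ ^ 2 * σ₂ ^ 2 = 0 := by rw [← hs2, ← hs]; ring
      have t1 : (0:ℝ) ≤ lam ^ 2 * σ₁ ^ 4 := by positivity
      have t2 : (0:ℝ) ≤ σ₁ ^ 2 * σ₂ ^ 2 := by positivity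
      have hl2 : lam ^ 2 = 0 := by
        have h4 : (0:ℝ) < σ₁ ^ 4 := by positivity
        nlinarith
      have hσ22 : σ₂ ^ 2 = 0 := by
        nlinarith
      have hl0 : lam = 0 := by nlinarith [sq_nonneg lam]
      have hσ20 : σ₂ = 0 := by nlinarith [sq_nonneg σ₂]
      have hγinf0 : γinf = 0 := by rw [hγinf, ← hs, hl0]; ring
      have hF' : ∀ x, F x = -a * x ^ 2 := by
        intro x; rw [hF, hl0, hσ20]; ring
      obtain ⟨g, hg0, hgd, hgb, hgt⟩ := deg_exists a ha F hF' γ₀ hγ₀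
      refine ⟨g, ⟨hg0, hgd⟩, ?_, by rw [hγinf0]; exact hgt⟩
      intro t ht
      exact ⟨(hgb t ht).1, le_trans (hgb t ht).2 (le_max_right _ _)⟩
    · -- generic case
      set rm : ℝ := -lam * σ₁ ^ 2 - s with hrm_def
      have hne : σ₁ ^ 2 ≠ 0 := ne_of_gt hσ₁2
      have hr2s : γinf - rm = 2 * s := by rw [hγinf, hrm_def]; ring
      have hsum : a * (γinf + rm) = -2 * lam := by
        rw [hγinf, hrm_def, ha_def]
        field_simp
        ring
      have hprod : -(a * (γinf * rm)) = σ₂ ^ 2 := by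
        rw [hγinf, hrm_def, ha_def]
        field_simp
        linear_combination hs2
      have hls : lam * σ₁ ^ 2 ≤ s := by
        rw [hs_def]
        exact Real.le_sqrt_of_sq_le (by nlinarith [sq_nonneg (σ₁ * σ₂)])
      have hr0 : 0 ≤ γinf := by rw [hγinf]; linarith
      have hγrm : rm < γ₀ := by
        have h1 : 0 ≤ lam * σ₁ ^ 2 := by positivity
        rw [hrm_def]; nlinarith
      obtain ⟨g, hg0, hgd, hgb, hgt⟩ :=
        riccati_exists a lam (σ₂ ^ 2) s γinf rm ha hlam hs hr2s hsum hprod hr0 F hF γ₀ hγ₀ hγrm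
      exact ⟨g, ⟨hg0, hgd⟩, hgb, hgt⟩
  · -- uniqueness
    rintro g₁ g₂ ⟨h10, h1d⟩ ⟨h20, h2d⟩
    exact quad_ode_unique a lam (σ₂ ^ 2) ha hlam F hF g₁ g₂ (by rw [h10, h20]) h1d h2d
end

section
/- Let h : [0,∞) → [0,∞) be Borel measurable and locally integrable and let γ₀ ≥ 0. Then there exists an absolutely continuous function γ^h : [0,∞) → ℝ with γ^h(0) = γ₀ satisfying (γ^h)'(t) = f(γ^h(t), h(t)) for almost every t ≥ 0, and every such solution satisfies 0 ≤ γ^h(t) ≤ γ⁰(t) ≤ max{γ∞⁰, γ₀} for all t ≥ 0, where γ⁰ is the solution of the uncontrolled equation (γ⁰)'(t) = f(γ⁰(t),0) with γ⁰(0) = γ₀. -/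
open Set MeasureTheory intervalIntegral Filter Topology NNReal

namespace Stmt2Aux

lemma ae_restrict_of_forall_ne {P : ℝ → Prop} {s : Set ℝ} (hs : MeasurableSet s) (c : ℝ)
    (h : ∀ x ∈ s, x ≠ c → P x) : ∀ᵐ x ∂(volume.restrict s), P x := by
  rw [ae_restrict_iff' hs]
  rw [ae_iff]
  refine measure_mono_null (t := {c}) ?_ (measure_singleton c)
  intro x hx
  simp only [mem_setOf_eq, not_forall] at hx
  obtain ⟨hxs, hPx⟩ := hx
  by_contra hne
  exact hPx (h x hxs hne)

lemma gronwall_zero {K u : ℝ → ℝ} {d : ℝ} (hd : 0 ≤ d)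
    (hK : LocallyIntegrable K volume) (hK0 : ∀ s, 0 ≤ K s)
    (hu : ContinuousOn u (Icc 0 d)) (hu0 : ∀ t ∈ Icc 0 d, 0 ≤ u t)
    (hle : ∀ t ∈ Icc 0 d, u t ≤ ∫ s in (0:ℝ)..t, K s * u s) :
    ∀ t ∈ Icc 0 d, u t = 0 := by
  have hKint : ∀ a b : ℝ, IntervalIntegrable K volume a b := fun a b =>
    (hK.integrableOn_isCompact isCompact_uIcc).intervalIntegrable
  have hKu_int : ∀ t₁ t₂, t₁ ∈ Icc 0 d → t₂ ∈ Icc 0 d →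
      IntervalIntegrable (fun s => K s * u s) volume t₁ t₂ := by
    intro t₁ t₂ h₁ h₂
    refine (hKint t₁ t₂).mul_continuousOn (hu.mono ?_)
    rw [uIcc_eq_union]
    exact union_subset (Icc_subset_Icc h₁.1 h₂.2) (Icc_subset_Icc h₂.1 h₁.2)
  set A : Set ℝ := {t | t ∈ Icc 0 d ∧ ∀ s ∈ Icc 0 t, u s = 0} with hA
  have hu00 : u 0 = 0 := by
    have := hle 0 ⟨le_refl 0, hd⟩
    rw [integral_same] at this
    exact le_antisymm this (hu0 0 ⟨le_refl 0, hd⟩)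
  have h0A : 0 ∈ A := ⟨⟨le_refl 0, hd⟩, fun s hs => by
    rw [show s = 0 from le_antisymm hs.2 hs.1]; exact hu00⟩
  have hbdd : BddAbove A := ⟨d, fun x hx => hx.1.2⟩
  set τ := sSup A with hτ
  have hτmem : τ ∈ Icc 0 d := ⟨le_csSup hbdd h0A, csSup_le ⟨0, h0A⟩ fun x hx => hx.1.2⟩
  have huz : ∀ s ∈ Ico 0 τ, u s = 0 := by
    intro s hs
    obtain ⟨t, htA, hst⟩ := exists_lt_of_lt_csSup ⟨0, h0A⟩ hs.2
    exact htA.2 s ⟨hs.1, hst.le⟩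
  have huτ : u τ = 0 := by
    rcases eq_or_lt_of_le hτmem.1 with he | hτpos
    · rw [← he]; exact hu00
    · have hne : (𝓝[Ico 0 τ] τ).NeBot := by
        rw [nhdsWithin_Ico_eq_nhdsLT hτpos]; infer_instance
      have h1 : Tendsto u (𝓝[Ico 0 τ] τ) (𝓝 (u τ)) :=
        (hu τ hτmem).mono (fun x hx => ⟨hx.1, hx.2.le.trans hτmem.2⟩)
      have h2 : Tendsto u (𝓝[Ico 0 τ] τ) (𝓝 0) := by
        refine Tendsto.congr' ?_ tendsto_const_nhds
        exact Filter.eventually_of_mem self_mem_nhdsWithin (fun x hx => (huz x hx).symm)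
      exact tendsto_nhds_unique h1 h2
  have huz' : ∀ s ∈ Icc 0 τ, u s = 0 := by
    intro s hs
    rcases eq_or_lt_of_le hs.2 with he | hlt
    · rw [he]; exact huτ
    · exact huz s ⟨hs.1, hlt⟩
  have hτA : τ ∈ A := ⟨hτmem, huz'⟩
  -- show τ = d
  have hτd : τ = d := by
    by_contra hne
    have hτlt : τ < d := lt_of_le_of_ne hτmem.2 hne
    set Λ : ℝ → ℝ := fun t => ∫ s in (0:ℝ)..t, K s with hΛ
    have hΛc : Continuous Λ := intervalIntegral.continuous_primitive hKint 0
    obtain ⟨δ₁, hδ₁pos, hδ₁⟩ := Metric.continuous_iff.mp hΛc τ (1/2) (by norm_num)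
    set δ := min (δ₁ / 2) (d - τ) with hδ
    have hδpos : 0 < δ := lt_min (by linarith) (by linarith)
    have hτδd : τ + δ ≤ d := by
      have : δ ≤ d - τ := min_le_right _ _
      linarith
    have hKhalf : ∫ s in τ..(τ + δ), K s ≤ 1/2 := by
      have hd1 : dist (τ + δ) τ < δ₁ := by
        rw [Real.dist_eq]
        have : δ ≤ δ₁ / 2 := min_le_left _ _
        rw [abs_of_nonneg (by linarith)]
        linarith
      have := hδ₁ (τ + δ) hd1
      rw [Real.dist_eq] at this
      have hadd := integral_add_adjacent_intervals (hKint 0 τ) (hKint τ (τ + δ))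
      have : Λ (τ + δ) - Λ τ < 1/2 := lt_of_abs_lt this
      simp only [hΛ] at this hadd ⊢
      linarith
    -- max of u on [τ, τ+δ]
    have hsub2 : Icc τ (τ + δ) ⊆ Icc 0 d := Icc_subset_Icc hτmem.1 hτδd
    obtain ⟨tm, htm, htmax⟩ := isCompact_Icc.exists_isMaxOn
      (nonempty_Icc.2 (by linarith)) (hu.mono hsub2)
    set S := u tm with hS
    have hS0 : 0 ≤ S := hu0 tm (hsub2 htm)
    have key : ∀ t ∈ Icc τ (τ + δ), u t ≤ 1/2 * S := by
      intro t ht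
      have htd : t ∈ Icc 0 d := hsub2 ht
      have h1 : u t ≤ ∫ s in (0:ℝ)..t, K s * u s := hle t htd
      have hi1 : IntervalIntegrable (fun s => K s * u s) volume 0 τ :=
        hKu_int 0 τ ⟨le_refl 0, hd⟩ hτmem
      have hi2 : IntervalIntegrable (fun s => K s * u s) volume τ t :=
        hKu_int τ t hτmem htd
      have hadd := integral_add_adjacent_intervals hi1 hi2
      have hz : ∫ s in (0:ℝ)..τ, K s * u s = 0 := by
        have heqon : EqOn (fun s => K s * u s) (fun _ => (0:ℝ)) (uIcc 0 τ) := by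
          intro s hs
          rw [uIcc_of_le hτmem.1] at hs
          simp [huz' s hs]
        rw [integral_congr heqon]
        simp
      have h2 : ∫ s in τ..t, K s * u s ≤ ∫ s in τ..t, K s * S := by
        refine integral_mono_on ht.1 hi2 ((hKint τ t).mul_const S) ?_
        intro s hs
        exact mul_le_mul_of_nonneg_left (htmax ⟨hs.1, hs.2.trans ht.2⟩) (hK0 s)
      have h3 : ∫ s in τ..t, K s * S = (∫ s in τ..t, K s) * S := integral_mul_const _ _
      have h4 : (∫ s in τ..t, K s) ≤ 1/2 := by
        have hadd2 := integral_add_adjacent_intervals (hKint τ t) (hKint t (τ + δ))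
        have h5 : 0 ≤ ∫ s in t..(τ + δ), K s := integral_nonneg ht.2 (fun s _ => hK0 s)
        linarith [hKhalf]
      have h6 : (∫ s in τ..t, K s) * S ≤ 1/2 * S :=
        mul_le_mul_of_nonneg_right h4 hS0
      linarith
    have hSz : S ≤ 0 := by
      have := key tm htm
      linarith
    have hzero2 : ∀ t ∈ Icc τ (τ + δ), u t = 0 := by
      intro t ht
      have := htmax ht
      exact le_antisymm (le_trans this hSz) (hu0 t (hsub2 ht))
    have hτδA : τ + δ ∈ A := by
      refine ⟨⟨by linarith [hτmem.1], hτδd⟩, fun s hs => ?_⟩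
      rcases le_or_gt s τ with hsle | hslt
      · exact huz' s ⟨hs.1, hsle⟩
      · exact hzero2 s ⟨hslt.le, hs.2⟩
    have := le_csSup hbdd hτδA
    linarith
  intro t ht
  rw [← hτd] at ht
  exact huz' t ht

lemma barrier_le {g F : ℝ → ℝ} {d b : ℝ} (hd : 0 ≤ d)
    (hg : ContinuousOn g (Icc 0 d)) (hg0 : g 0 ≤ b)
    (hFint : ∀ t ∈ Icc 0 d, IntervalIntegrable F volume 0 t)
    (hid : ∀ t ∈ Icc 0 d, g t = g 0 + ∫ s in (0:ℝ)..t, F s)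
    (hF : ∀ s ∈ Icc 0 d, b ≤ g s → F s ≤ 0) :
    ∀ t ∈ Icc 0 d, g t ≤ b := by
  by_contra hcon
  push_neg at hcon
  obtain ⟨t₀, ht₀, hgt₀⟩ := hcon
  set S : Set ℝ := {s | s ∈ Icc 0 t₀ ∧ g s ≤ b} with hSdef
  have h0S : 0 ∈ S := ⟨⟨le_refl 0, ht₀.1⟩, hg0⟩
  have hbdd : BddAbove S := ⟨t₀, fun x hx => hx.1.2⟩
  set s₀ := sSup S with hs₀def
  have hs₀cl : s₀ ∈ closure S := csSup_mem_closure ⟨0, h0S⟩ hbdd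
  have hSsub : S ⊆ Icc 0 t₀ := fun x hx => hx.1
  have hs₀I : s₀ ∈ Icc 0 t₀ := isClosed_Icc.closure_subset ((closure_mono hSsub) hs₀cl)
  have hs₀d : s₀ ∈ Icc 0 d := ⟨hs₀I.1, hs₀I.2.trans ht₀.2⟩
  have hgs₀ : g s₀ ≤ b := by
    have hcw : ContinuousWithinAt g S s₀ :=
      (hg.continuousWithinAt hs₀d).mono (hSsub.trans (Icc_subset_Icc_right ht₀.2))
    have h1 := hcw.mem_closure_image hs₀cl
    have himg : g '' S ⊆ Iic b := by rintro y ⟨x, hx, rfl⟩; exact hx.2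
    have h2 : g s₀ ∈ closure (Iic b) := closure_mono himg h1
    rwa [closure_Iic] at h2
  have hs₀lt : s₀ < t₀ := lt_of_le_of_ne hs₀I.2 (fun he => by rw [he] at hgs₀; linarith)
  have hgt : ∀ s ∈ Ioc s₀ t₀, b ≤ g s := by
    intro s hs
    by_contra hb
    push_neg at hb
    exact absurd (le_csSup hbdd ⟨⟨hs₀I.1.trans hs.1.le, hs.2⟩, hb.le⟩) (not_le.2 hs.1)
  have hint1 : IntervalIntegrable F volume 0 s₀ := hFint s₀ hs₀d
  have hint2 : IntervalIntegrable F volume s₀ t₀ := by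
    refine (hFint t₀ ht₀).mono_set ?_
    rw [uIcc_of_le ht₀.1, uIcc_of_le hs₀lt.le]
    exact Icc_subset_Icc hs₀I.1 (le_refl t₀)
  have heq : g t₀ - g s₀ = ∫ s in s₀..t₀, F s := by
    have e1 := hid t₀ ht₀
    have e2 := hid s₀ hs₀d
    have hadd := integral_add_adjacent_intervals hint1 hint2
    rw [e1, e2]
    linarith
  have hneg : (∫ s in s₀..t₀, F s) ≤ 0 := by
    have hmono : (∫ s in s₀..t₀, F s) ≤ ∫ s in s₀..t₀, (0:ℝ) := by
      refine integral_mono_ae_restrict hs₀lt.le hint2 intervalIntegrable_const ?_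
      refine ae_restrict_of_forall_ne measurableSet_Icc s₀ ?_
      intro x hx hne
      have hxI : x ∈ Ioc s₀ t₀ := ⟨lt_of_le_of_ne hx.1 (Ne.symm hne), hx.2⟩
      exact hF x ⟨hs₀d.1.trans hx.1, hx.2.trans ht₀.2⟩ (hgt x hxI)
    simpa using hmono
  linarith

lemma barrier_ge {g F : ℝ → ℝ} {d b : ℝ} (hd : 0 ≤ d)
    (hg : ContinuousOn g (Icc 0 d)) (hg0 : b ≤ g 0)
    (hFint : ∀ t ∈ Icc 0 d, IntervalIntegrable F volume 0 t)
    (hid : ∀ t ∈ Icc 0 d, g t = g 0 + ∫ s in (0:ℝ)..t, F s)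
    (hF : ∀ s ∈ Icc 0 d, g s ≤ b → 0 ≤ F s) :
    ∀ t ∈ Icc 0 d, b ≤ g t := by
  have hres := barrier_le (g := fun t => -g t) (F := fun s => -F s) (d := d) (b := -b) hd
    hg.neg (by simpa using hg0) (fun t ht => (hFint t ht).neg)
    (fun t ht => by
      show -g t = -g 0 + ∫ s in (0:ℝ)..t, -F s
      rw [intervalIntegral.integral_neg, hid t ht]; ring)
    (fun s hs hbs => by
      have hbs' : -b ≤ -g s := hbs
      show -F s ≤ 0
      have := hF s hs (by linarith)
      linarith)
  intro t ht
  have h2 : -g t ≤ -b := hres t ht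
  linarith


lemma sol_nonneg {a lam σ₂ : ℝ} (ha : 0 ≤ a) (hlam : 0 ≤ lam)
    {hh : ℝ → ℝ} (hh0 : ∀ s, 0 ≤ hh s) (hhloc : LocallyIntegrable hh volume)
    {g : ℝ → ℝ} {d : ℝ} (hd : 0 ≤ d) (hg : ContinuousOn g (Icc 0 d)) (hg0 : 0 ≤ g 0)
    (hFint : ∀ t ∈ Icc 0 d, IntervalIntegrable
      (fun s => -(a + hh s) * (g s)^2 - 2*lam*(g s) + σ₂^2) volume 0 t)
    (hid : ∀ t ∈ Icc 0 d, g t = g 0 + ∫ s in (0:ℝ)..t,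
      (-(a + hh s) * (g s)^2 - 2*lam*(g s) + σ₂^2)) :
    ∀ t ∈ Icc 0 d, 0 ≤ g t := by
  set F : ℝ → ℝ := fun s => -(a + hh s) * (g s)^2 - 2*lam*(g s) + σ₂^2 with hFdef
  obtain ⟨bm, hbm, hbmax⟩ := isCompact_Icc.exists_isMaxOn (nonempty_Icc.2 hd) hg.abs
  set B := |g bm| with hBdef
  have hB : ∀ s ∈ Icc 0 d, |g s| ≤ B := hbmax
  have hB0 : 0 ≤ B := abs_nonneg _
  set K : ℝ → ℝ := fun s => B * (a + hh s) with hKdef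
  have hKloc : LocallyIntegrable K volume := ((locallyIntegrable_const a).add hhloc).smul B
  have hK0 : ∀ s, 0 ≤ K s := fun s => mul_nonneg hB0 (by linarith [hh0 s])
  have hKint : ∀ p q : ℝ, IntervalIntegrable K volume p q := fun p q =>
    (hKloc.integrableOn_isCompact isCompact_uIcc).intervalIntegrable
  set u : ℝ → ℝ := fun t => max (-(g t)) 0 with hudef
  have hu_cont : ContinuousOn u (Icc 0 d) := by exact hg.neg.sup continuousOn_const
  have hu0 : ∀ t ∈ Icc 0 d, 0 ≤ u t := fun t _ => le_max_right _ _
  have hle : ∀ t ∈ Icc 0 d, u t ≤ ∫ s in (0:ℝ)..t, K s * u s := by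
    intro t ht
    have hKu_int : ∀ p q : ℝ, p ∈ Icc 0 d → q ∈ Icc 0 d →
        IntervalIntegrable (fun s => K s * u s) volume p q := by
      intro p q hp hq
      refine (hKint p q).mul_continuousOn (hu_cont.mono ?_)
      rw [uIcc_eq_union]
      exact union_subset (Icc_subset_Icc hp.1 hq.2) (Icc_subset_Icc hq.1 hp.2)
    rcases le_or_gt 0 (g t) with hpos | hneg
    · have hut : u t = 0 := max_eq_right (by linarith)
      rw [hut]
      exact integral_nonneg ht.1 (fun s _ => mul_nonneg (hK0 s) (le_max_right _ _))
    · set S2 : Set ℝ := {s | s ∈ Icc 0 t ∧ 0 ≤ g s} with hS2def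
      have h0S : 0 ∈ S2 := ⟨⟨le_refl 0, ht.1⟩, hg0⟩
      have hbdd : BddAbove S2 := ⟨t, fun x hx => hx.1.2⟩
      set s₀ := sSup S2 with hs₀def
      have hs₀cl : s₀ ∈ closure S2 := csSup_mem_closure ⟨0, h0S⟩ hbdd
      have hSsub : S2 ⊆ Icc 0 t := fun x hx => hx.1
      have hs₀I : s₀ ∈ Icc 0 t := isClosed_Icc.closure_subset ((closure_mono hSsub) hs₀cl)
      have hs₀d : s₀ ∈ Icc 0 d := ⟨hs₀I.1, hs₀I.2.trans ht.2⟩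
      have hgs₀ : 0 ≤ g s₀ := by
        have hcw : ContinuousWithinAt g S2 s₀ :=
          (hg.continuousWithinAt hs₀d).mono (hSsub.trans (Icc_subset_Icc_right ht.2))
        have h1 := hcw.mem_closure_image hs₀cl
        have himg : g '' S2 ⊆ Ici 0 := by rintro y ⟨x, hx, rfl⟩; exact hx.2
        have h2 : g s₀ ∈ closure (Ici 0) := closure_mono himg h1
        rwa [closure_Ici] at h2
      have hs₀lt : s₀ < t := lt_of_le_of_ne hs₀I.2 (fun he => by rw [he] at hgs₀; linarith)
      have hgneg : ∀ s ∈ Ioc s₀ t, g s < 0 := by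
        intro s hs
        by_contra hb
        push_neg at hb
        exact absurd (le_csSup hbdd ⟨⟨hs₀I.1.trans hs.1.le, hs.2⟩, hb⟩) (not_le.2 hs.1)
      have hint2 : IntervalIntegrable F volume s₀ t := by
        refine (hFint t ht).mono_set ?_
        rw [uIcc_of_le ht.1, uIcc_of_le hs₀lt.le]
        exact Icc_subset_Icc hs₀I.1 (le_refl t)
      have heq : g t - g s₀ = ∫ s in s₀..t, F s := by
        have e1 := hid t ht
        have e2 := hid s₀ hs₀d
        have hadd := integral_add_adjacent_intervals (hFint s₀ hs₀d) hint2
        rw [e1, e2]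
        linarith
      have hmono : (∫ s in s₀..t, -F s) ≤ ∫ s in s₀..t, K s * u s := by
        refine integral_mono_ae_restrict hs₀lt.le hint2.neg
          (hKu_int s₀ t hs₀d ht) ?_
        refine ae_restrict_of_forall_ne measurableSet_Icc s₀ ?_
        intro x hx hne
        have hxI : x ∈ Ioc s₀ t := ⟨lt_of_le_of_ne hx.1 (Ne.symm hne), hx.2⟩
        have hgx : g x < 0 := hgneg x hxI
        have hux : u x = -g x := max_eq_left (by linarith)
        have hxd : x ∈ Icc 0 d := ⟨hs₀d.1.trans hx.1, hx.2.trans ht.2⟩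
        have hBx : -g x ≤ B := (neg_le_abs _).trans (hB x hxd)
        have hax : 0 ≤ a + hh x := by linarith [hh0 x]
        have h2 : (a + hh x) * ((g x)^2) ≤ (a + hh x) * (B * (-g x)) :=
          mul_le_mul_of_nonneg_left (by nlinarith) hax
        have h3 : lam * g x ≤ 0 := mul_nonpos_of_nonneg_of_nonpos hlam hgx.le
        have h4 : (0:ℝ) ≤ σ₂^2 := sq_nonneg _
        show -F x ≤ K x * u x
        rw [hux, hFdef, hKdef]
        simp only
        nlinarith
      have hne2 : -g t ≤ ∫ s in s₀..t, K s * u s := by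
        have hneg2 : (∫ s in s₀..t, -F s) = -(g t - g s₀) := by
          rw [intervalIntegral.integral_neg, ← heq]
        have : -g t ≤ -(g t - g s₀) := by linarith
        linarith [hmono, hneg2.symm.le]
      have hsplit := integral_add_adjacent_intervals
        (hKu_int 0 s₀ ⟨le_refl 0, hd⟩ hs₀d) (hKu_int s₀ t hs₀d ht)
      have hfirst : 0 ≤ ∫ s in (0:ℝ)..s₀, K s * u s :=
        integral_nonneg hs₀d.1 (fun s _ => mul_nonneg (hK0 s) (le_max_right _ _))
      have hut : u t = -g t := max_eq_left (by linarith)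
      rw [hut]
      linarith
  have hz := gronwall_zero hd hKloc hK0 hu_cont hu0 hle
  intro t ht
  have := hz t ht
  have h5 : -g t ≤ u t := le_max_left _ _
  rw [this] at h5
  linarith


lemma local_exists {fc : ℝ → ℝ → ℝ} {K : ℝ → ℝ}
    (hmeas : ∀ G : ℝ → ℝ, Continuous G → ∀ p q : ℝ,
      IntervalIntegrable (fun s => fc s (G s)) volume p q)
    (hlip : ∀ s x y, |fc s x - fc s y| ≤ K s * |x - y|)
    (hK0 : ∀ s, 0 ≤ K s)
    (hKint : ∀ p q : ℝ, IntervalIntegrable K volume p q)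
    {T₁ T₂ : ℝ} (hT : T₁ ≤ T₂) (hhalf : (∫ s in T₁..T₂, K s) ≤ 1/2) (x₀ : ℝ) :
    ∃ g : ℝ → ℝ, Continuous g ∧ ∀ t ∈ Icc T₁ T₂, g t = x₀ + ∫ s in T₁..t, fc s (g s) := by
  haveI hne : Nonempty (Icc T₁ T₂) := (nonempty_Icc.2 hT).to_subtype
  set ext : C(Icc T₁ T₂, ℝ) → ℝ → ℝ := fun g s => g (projIcc T₁ T₂ hT s) with hext
  have hextc : ∀ g : C(Icc T₁ T₂, ℝ), Continuous (ext g) := fun g =>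
    g.continuous.comp continuous_projIcc
  set Φ : C(Icc T₁ T₂, ℝ) → C(Icc T₁ T₂, ℝ) := fun g =>
    ⟨fun t => x₀ + ∫ s in T₁..(t:ℝ), fc s (ext g s),
      continuous_const.add ((intervalIntegral.continuous_primitive
        (hmeas (ext g) (hextc g)) T₁).comp continuous_subtype_val)⟩ with hΦ
  have hcontr : ∀ g₁ g₂, dist (Φ g₁) (Φ g₂) ≤ 2⁻¹ * dist g₁ g₂ := by
    intro g₁ g₂
    rw [ContinuousMap.dist_le (by positivity)]
    intro x
    have hx : (x:ℝ) ∈ Icc T₁ T₂ := x.2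
    have hi1 := hmeas (ext g₁) (hextc g₁) T₁ x
    have hi2 := hmeas (ext g₂) (hextc g₂) T₁ x
    simp only [hΦ, ContinuousMap.coe_mk]
    rw [Real.dist_eq]
    have hsub : (x₀ + ∫ s in T₁..(x:ℝ), fc s (ext g₁ s))
        - (x₀ + ∫ s in T₁..(x:ℝ), fc s (ext g₂ s))
        = ∫ s in T₁..(x:ℝ), (fc s (ext g₁ s) - fc s (ext g₂ s)) := by
      rw [integral_sub hi1 hi2]; ring
    rw [hsub]
    calc |∫ s in T₁..(x:ℝ), (fc s (ext g₁ s) - fc s (ext g₂ s))|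
        ≤ ∫ s in T₁..(x:ℝ), |fc s (ext g₁ s) - fc s (ext g₂ s)| :=
          intervalIntegral.abs_integral_le_integral_abs hx.1
      _ ≤ ∫ s in T₁..(x:ℝ), K s * dist g₁ g₂ := by
          refine integral_mono_on hx.1 (hi1.sub hi2).abs ((hKint T₁ x).mul_const _) ?_
          intro s _
          refine (hlip s _ _).trans (mul_le_mul_of_nonneg_left ?_ (hK0 s))
          have hd := ContinuousMap.dist_apply_le_dist (f := g₁) (g := g₂) (projIcc T₁ T₂ hT s)
          rwa [Real.dist_eq] at hd
      _ = (∫ s in T₁..(x:ℝ), K s) * dist g₁ g₂ := integral_mul_const _ _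
      _ ≤ 2⁻¹ * dist g₁ g₂ := by
          refine mul_le_mul_of_nonneg_right ?_ dist_nonneg
          have hadd := integral_add_adjacent_intervals (hKint T₁ x) (hKint x T₂)
          have hpos : 0 ≤ ∫ s in (x:ℝ)..T₂, K s := integral_nonneg hx.2 (fun s _ => hK0 s)
          linarith
  have hcw : ContractingWith 2⁻¹ Φ := by
    have hlt : ((2:ℝ≥0))⁻¹ < 1 := by
      rw [← NNReal.coe_lt_coe]
      push_cast
      norm_num
    refine ⟨hlt, LipschitzWith.of_dist_le_mul (fun g₁ g₂ => ?_)⟩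
    have h1 := hcontr g₁ g₂
    have h2 : ((2⁻¹:ℝ≥0) : ℝ) = (2⁻¹:ℝ) := by
      simp
    rw [h2]
    exact h1
  set gs := ContractingWith.fixedPoint Φ hcw with hgs
  have hfix : Function.IsFixedPt Φ gs := ContractingWith.fixedPoint_isFixedPt hcw
  refine ⟨ext gs, hextc gs, ?_⟩
  intro t ht
  have hfixeq : Φ gs = gs := hfix
  have hcf := DFunLike.congr_fun hfixeq (projIcc T₁ T₂ hT t)
  rw [Set.projIcc_of_mem hT ht] at hcf
  have : ext gs t = gs ⟨t, ht⟩ := by rw [hext]; simp [Set.projIcc_of_mem hT ht]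
  rw [this, ← hcf]
  simp only [hΦ, ContinuousMap.coe_mk]


lemma sol_unique {fc : ℝ → ℝ → ℝ} {K : ℝ → ℝ}
    (hmeas : ∀ G : ℝ → ℝ, Continuous G → ∀ p q : ℝ,
      IntervalIntegrable (fun s => fc s (G s)) volume p q)
    (hlip : ∀ s x y, |fc s x - fc s y| ≤ K s * |x - y|)
    (hK0 : ∀ s, 0 ≤ K s) (hKloc : LocallyIntegrable K volume)
    {T γ₀ : ℝ} (hT : 0 ≤ T) {g₁ g₂ : ℝ → ℝ} (hc₁ : Continuous g₁) (hc₂ : Continuous g₂)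
    (hid₁ : ∀ t ∈ Icc 0 T, g₁ t = γ₀ + ∫ s in (0:ℝ)..t, fc s (g₁ s))
    (hid₂ : ∀ t ∈ Icc 0 T, g₂ t = γ₀ + ∫ s in (0:ℝ)..t, fc s (g₂ s)) :
    ∀ t ∈ Icc 0 T, g₁ t = g₂ t := by
  have hucont : Continuous (fun t => |g₁ t - g₂ t|) := (hc₁.sub hc₂).abs
  have hle : ∀ t ∈ Icc 0 T, |g₁ t - g₂ t| ≤ ∫ s in (0:ℝ)..t, K s * |g₁ s - g₂ s| := by
    intro t ht
    have hi1 := hmeas g₁ hc₁ 0 t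
    have hi2 := hmeas g₂ hc₂ 0 t
    have hKint : IntervalIntegrable K volume 0 t :=
      (hKloc.integrableOn_isCompact isCompact_uIcc).intervalIntegrable
    have hdiff : g₁ t - g₂ t = ∫ s in (0:ℝ)..t, (fc s (g₁ s) - fc s (g₂ s)) := by
      rw [integral_sub hi1 hi2, hid₁ t ht, hid₂ t ht]; ring
    rw [hdiff]
    calc |∫ s in (0:ℝ)..t, (fc s (g₁ s) - fc s (g₂ s))|
        ≤ ∫ s in (0:ℝ)..t, |fc s (g₁ s) - fc s (g₂ s)| :=
          intervalIntegral.abs_integral_le_integral_abs ht.1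
      _ ≤ ∫ s in (0:ℝ)..t, K s * |g₁ s - g₂ s| := by
          refine integral_mono_on ht.1 (hi1.sub hi2).abs
            (hKint.mul_continuousOn hucont.continuousOn) (fun s _ => hlip s _ _)
  have hz := gronwall_zero hT hKloc hK0 hucont.continuousOn
    (fun t _ => abs_nonneg _) hle
  intro t ht
  have h2 := hz t ht
  have h3 : g₁ t - g₂ t = 0 := abs_eq_zero.mp h2
  linarith

lemma global_exists {fc : ℝ → ℝ → ℝ} {K : ℝ → ℝ}
    (hmeas : ∀ G : ℝ → ℝ, Continuous G → ∀ p q : ℝ,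
      IntervalIntegrable (fun s => fc s (G s)) volume p q)
    (hlip : ∀ s x y, |fc s x - fc s y| ≤ K s * |x - y|)
    (hK0 : ∀ s, 0 ≤ K s) (hKloc : LocallyIntegrable K volume)
    (γ₀ : ℝ) {T : ℝ} (hT : 0 ≤ T) :
    ∃ g : ℝ → ℝ, Continuous g ∧
      ∀ t ∈ Icc 0 T, g t = γ₀ + ∫ s in (0:ℝ)..t, fc s (g s) := by
  have hKint : ∀ p q : ℝ, IntervalIntegrable K volume p q := fun p q =>
    (hKloc.integrableOn_isCompact isCompact_uIcc).intervalIntegrable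
  set A : Set ℝ := {τ | τ ∈ Icc 0 T ∧ ∃ g : ℝ → ℝ, Continuous g ∧
      ∀ t ∈ Icc 0 τ, g t = γ₀ + ∫ s in (0:ℝ)..t, fc s (g s)} with hA
  have h0A : 0 ∈ A := by
    refine ⟨⟨le_refl 0, hT⟩, fun _ => γ₀, continuous_const, ?_⟩
    intro t ht
    have : t = 0 := le_antisymm ht.2 ht.1
    rw [this]
    simp
  have hbdd : BddAbove A := ⟨T, fun x hx => hx.1.2⟩
  set τ := sSup A with hτ
  have hτmem : τ ∈ Icc 0 T := ⟨le_csSup hbdd h0A, csSup_le ⟨0, h0A⟩ fun x hx => hx.1.2⟩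
  set Λ : ℝ → ℝ := fun t => ∫ s in (0:ℝ)..t, K s with hΛ
  have hΛc : Continuous Λ := intervalIntegral.continuous_primitive hKint 0
  obtain ⟨δ₁, hδ₁pos, hδ₁⟩ := Metric.continuous_iff.mp hΛc τ (1/4) (by norm_num)
  set δ := δ₁ / 2 with hδ
  have hδpos : 0 < δ := by linarith
  obtain ⟨T₁, hT₁A, hT₁gt⟩ := exists_lt_of_lt_csSup ⟨0, h0A⟩
    (show τ - δ < τ by linarith)
  have hT₁le : T₁ ≤ τ := le_csSup hbdd hT₁A
  set T₂ := min (τ + δ) T with hT₂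
  have hT₁₂ : T₁ ≤ T₂ := le_min (by linarith) hT₁A.1.2
  obtain ⟨g₁, hg₁c, hg₁id⟩ := hT₁A.2
  -- the interval [T₁, T₂] has small K-integral
  have hhalf : (∫ s in T₁..T₂, K s) ≤ 1/2 := by
    have hb2 : τ - δ < T₂ := lt_of_lt_of_le hT₁gt hT₁₂
    have hb2' : T₂ ≤ τ + δ := min_le_left _ _
    have hd1 : dist T₁ τ < δ₁ := by
      rw [Real.dist_eq, abs_lt]
      constructor <;> linarith
    have hd2 : dist T₂ τ < δ₁ := by
      rw [Real.dist_eq, abs_lt]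
      constructor <;> linarith
    have h1 := hδ₁ T₁ hd1
    have h2 := hδ₁ T₂ hd2
    rw [Real.dist_eq] at h1 h2
    have h1' := abs_lt.mp h1
    have h2' := abs_lt.mp h2
    have hadd := integral_add_adjacent_intervals (hKint 0 T₁) (hKint T₁ T₂)
    have e : (∫ s in T₁..T₂, K s) = Λ T₂ - Λ T₁ := by
      simp only [hΛ]
      linarith
    rw [e]
    linarith
  obtain ⟨g₂, hg₂c, hg₂id⟩ := local_exists hmeas hlip hK0 hKint hT₁₂ hhalf (g₁ T₁)
  have hg₂T₁ : g₂ T₁ = g₁ T₁ := by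
    have := hg₂id T₁ (left_mem_Icc.2 hT₁₂)
    simpa using this
  set g : ℝ → ℝ := fun t => if t ≤ T₁ then g₁ t else g₂ t with hg
  have hgc : Continuous g :=
    Continuous.if_le hg₁c hg₂c continuous_id continuous_const
      (fun x hx => by rw [hx]; exact hg₂T₁.symm)
  have hgid : ∀ t ∈ Icc 0 T₂, g t = γ₀ + ∫ s in (0:ℝ)..t, fc s (g s) := by
    intro t ht
    rcases le_or_gt t T₁ with hle | hlt
    · have hgt1 : g t = g₁ t := if_pos hle
      rw [hgt1, hg₁id t ⟨ht.1, hle⟩]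
      congr 1
      refine integral_congr ?_
      intro s hs
      rw [uIcc_of_le ht.1] at hs
      have hsT₁ : s ≤ T₁ := hs.2.trans hle
      simp only [hg, if_pos hsT₁]
    · have hgt2 : g t = g₂ t := if_neg (not_le.2 hlt)
      have e2 := hg₂id t ⟨hlt.le, ht.2⟩
      have e3 : (∫ s in T₁..t, fc s (g₂ s)) = ∫ s in T₁..t, fc s (g s) := by
        refine integral_congr ?_
        intro s hs
        rw [uIcc_of_le hlt.le] at hs
        rcases eq_or_lt_of_le hs.1 with he | hlt2
        · rw [← he]
          have hgT₁ : g T₁ = g₁ T₁ := if_pos (le_refl T₁)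
          show fc T₁ (g₂ T₁) = fc T₁ (g T₁)
          rw [hgT₁, hg₂T₁]
        · show fc s (g₂ s) = fc s (g s)
          rw [show g s = g₂ s from if_neg (not_le.2 hlt2)]
      have e4 := hg₁id T₁ ⟨hT₁A.1.1, le_refl T₁⟩
      have e5 : (∫ s in (0:ℝ)..T₁, fc s (g₁ s)) = ∫ s in (0:ℝ)..T₁, fc s (g s) := by
        refine integral_congr ?_
        intro s hs
        rw [uIcc_of_le hT₁A.1.1] at hs
        simp only [hg, if_pos hs.2]
      have hadd := integral_add_adjacent_intervals (hmeas g hgc 0 T₁) (hmeas g hgc T₁ t)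
      rw [hgt2, e2, e3, e4, e5]
      linarith
  have hT₂A : T₂ ∈ A := ⟨⟨le_trans hT₁A.1.1 hT₁₂, min_le_right _ _⟩, g, hgc, hgid⟩
  have hT₂τ : T₂ ≤ τ := le_csSup hbdd hT₂A
  have hTlt : ¬ (τ + δ ≤ T) := by
    intro hc
    have : T₂ = τ + δ := min_eq_left hc
    linarith
  have hT₂T : T₂ = T := min_eq_right (le_of_lt (not_le.1 hTlt))
  exact ⟨g, hgc, fun t ht => hgid t (by rw [hT₂T]; exact ht)⟩

end Stmt2Aux

open Stmt2Aux

set_option maxHeartbeats 2000000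

/-- For a Borel measurable, locally integrable, nonnegative information
acquisition rate h and γ₀ ≥ 0, there exists an absolutely continuous solution of
γ' = f(γ(t), h(t)) (encoded in integral form), and every such solution satisfies
0 ≤ γ^h(t) ≤ γ⁰(t) ≤ max{γ∞⁰, γ₀}, where γ⁰ is the uncontrolled solution. -/
theorem stmt_2 (σ₁ σ₂ lam : ℝ) (hσ₁ : 0 < σ₁) (hσ₂ : 0 ≤ σ₂) (hlam : 0 ≤ lam)
    (f : ℝ → ℝ → ℝ)
    (hf : ∀ γ h : ℝ, f γ h = -(1 / σ₁ ^ 2 + h) * γ ^ 2 - 2 * lam * γ + σ₂ ^ 2)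
    (γinf : ℝ)
    (hγinf : γinf = -lam * σ₁ ^ 2 + Real.sqrt (lam ^ 2 * σ₁ ^ 4 + σ₁ ^ 2 * σ₂ ^ 2))
    (γ₀ : ℝ) (hγ₀ : 0 ≤ γ₀)
    (h : ℝ → ℝ) (h_meas : Measurable h) (h_nonneg : ∀ t : ℝ, 0 ≤ h t)
    (h_locint : MeasureTheory.LocallyIntegrable h MeasureTheory.volume)
    (γzero : ℝ → ℝ) (hγzero0 : γzero 0 = γ₀)
    (hγzero : ∀ t ∈ Set.Ici (0 : ℝ),
      HasDerivWithinAt γzero (f (γzero t) 0) (Set.Ici 0) t) :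
    (∃ g : ℝ → ℝ, g 0 = γ₀ ∧ ContinuousOn g (Set.Ici 0) ∧
      ∀ t ∈ Set.Ici (0 : ℝ),
        IntervalIntegrable (fun s => f (g s) (h s)) MeasureTheory.volume 0 t ∧
        g t = γ₀ + ∫ s in (0 : ℝ)..t, f (g s) (h s)) ∧
    (∀ g : ℝ → ℝ,
      (g 0 = γ₀ ∧ ContinuousOn g (Set.Ici 0) ∧
        ∀ t ∈ Set.Ici (0 : ℝ),
          IntervalIntegrable (fun s => f (g s) (h s)) MeasureTheory.volume 0 t ∧
          g t = γ₀ + ∫ s in (0 : ℝ)..t, f (g s) (h s)) →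
      ∀ t ∈ Set.Ici (0 : ℝ), 0 ≤ g t ∧ g t ≤ γzero t ∧ γzero t ≤ max γinf γ₀) := by
  have hσ₁2 : 0 < σ₁^2 := by positivity
  have ha0 : 0 < 1/σ₁^2 := by positivity
  set M : ℝ := max γinf γ₀ with hM
  have hsq : Real.sqrt (lam^2*σ₁^4 + σ₁^2*σ₂^2) ^ 2 = lam^2*σ₁^4 + σ₁^2*σ₂^2 :=
    Real.sq_sqrt (by positivity)
  have hsqge : lam * σ₁^2 ≤ Real.sqrt (lam^2*σ₁^4 + σ₁^2*σ₂^2) := by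
    rw [show lam*σ₁^2 = Real.sqrt ((lam*σ₁^2)^2) from (Real.sqrt_sq (by positivity)).symm]
    apply Real.sqrt_le_sqrt
    nlinarith [sq_nonneg (σ₁*σ₂)]
  have hγinf0 : 0 ≤ γinf := by rw [hγinf]; linarith
  have hM0 : 0 ≤ M := le_trans hγinf0 (le_max_left _ _)
  have hMγinf : γinf ≤ M := le_max_left _ _
  have hMγ₀ : γ₀ ≤ M := le_max_right _ _
  have hroot' : γinf^2 + 2*lam*σ₁^2*γinf - σ₁^2*σ₂^2 = 0 := by
    rw [hγinf]; ring_nf; nlinarith [hsq]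
  have hMroot : σ₂^2 ≤ (1/σ₁^2)*M^2 + 2*lam*M := by
    have hroot : (1/σ₁^2) * γinf^2 + 2*lam*γinf - σ₂^2 = 0 := by
      have h1 : (1/σ₁^2) * (γinf^2 + 2*lam*σ₁^2*γinf - σ₁^2*σ₂^2) = 0 := by
        rw [hroot']; ring
      field_simp at h1 ⊢
      nlinarith [h1]
    nlinarith [mul_nonneg (mul_nonneg ha0.le (sub_nonneg.2 hMγinf)) (by linarith : (0:ℝ) ≤ M + γinf),
      mul_nonneg hlam (sub_nonneg.2 hMγinf)]
  -- clamp function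
  set cl : ℝ → ℝ := fun x => min (max x 0) M with hcl
  have hcl0 : ∀ x, 0 ≤ cl x := fun x => le_min (le_max_right x 0) hM0
  have hclM : ∀ x, cl x ≤ M := fun x => min_le_right _ _
  have hcl_lip : ∀ x y, |cl x - cl y| ≤ |x - y| := by
    intro x y
    calc |cl x - cl y| ≤ max |max x 0 - max y 0| |M - M| := abs_min_sub_min_le_max _ _ _ _
      _ = |max x 0 - max y 0| := by rw [sub_self, abs_zero]; exact max_eq_left (abs_nonneg _)
      _ ≤ |x - y| := abs_max_sub_max_le_abs x y 0
  have hcl_id : ∀ x, 0 ≤ x → x ≤ M → cl x = x := by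
    intro x h1 h2
    show min (max x 0) M = x
    rw [max_eq_left h1, min_eq_left h2]
  have hcl_hi : ∀ x, M ≤ x → cl x = M := by
    intro x hx
    show min (max x 0) M = M
    rw [max_eq_left (hM0.trans hx), min_eq_right hx]
  have hcl_lo : ∀ x, x ≤ 0 → cl x = 0 := by
    intro x hx
    show min (max x 0) M = 0
    rw [max_eq_right hx, min_eq_left hM0]
  set fc : ℝ → ℝ → ℝ := fun s x => -(1/σ₁^2 + h s) * (cl x)^2 - 2*lam*(cl x) + σ₂^2 with hfc
  set K : ℝ → ℝ := fun s => (2*M) * (1/σ₁^2 + h s) + 2*lam with hK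
  have hKloc : LocallyIntegrable K volume := by
    have h1 : LocallyIntegrable (fun s => 1/σ₁^2 + h s) volume :=
      (locallyIntegrable_const _).add h_locint
    exact (h1.smul (2*M)).add (locallyIntegrable_const (2*lam))
  have hA0 : ∀ s, 0 ≤ 1/σ₁^2 + h s := fun s => add_nonneg ha0.le (h_nonneg s)
  have hK0 : ∀ s, 0 ≤ K s := fun s =>
    add_nonneg (mul_nonneg (by linarith) (hA0 s)) (by linarith)
  have hmeas : ∀ G : ℝ → ℝ, Continuous G → ∀ p q : ℝ,
      IntervalIntegrable (fun s => fc s (G s)) volume p q := by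
    intro G hG p q
    have hclG : Continuous fun s => cl (G s) := (hG.max continuous_const).min continuous_const
    have hmeas' : AEStronglyMeasurable (fun s => fc s (G s)) (volume.restrict (Set.uIoc p q)) := by
      apply Measurable.aestronglyMeasurable
      have m1 : Measurable fun s => (1/σ₁^2 + h s) := measurable_const.add h_meas
      exact ((m1.neg.mul ((hclG.measurable).pow_const 2)).sub
        (hclG.measurable.const_mul (2*lam))).add measurable_const
    have hbnd : LocallyIntegrable (fun s => (M^2) * (1/σ₁^2 + h s) + (2*lam*M + σ₂^2)) volume := by
      have h1 : LocallyIntegrable (fun s => 1/σ₁^2 + h s) volume :=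
        (locallyIntegrable_const _).add h_locint
      exact (h1.smul (M^2)).add (locallyIntegrable_const _)
    rw [intervalIntegrable_iff]
    refine Integrable.mono'
      ((hbnd.integrableOn_isCompact isCompact_uIcc).mono_set Ioc_subset_Icc_self) hmeas' ?_
    refine Filter.Eventually.of_forall (fun s => ?_)
    have hc := hcl0 (G s)
    have hcM := hclM (G s)
    have hA := hA0 s
    rw [Real.norm_eq_abs, abs_le]
    constructor
    · simp only [hfc]
      nlinarith [mul_nonneg hA (by nlinarith : (0:ℝ) ≤ M^2 - (cl (G s))^2),
        mul_nonneg hlam (by linarith : (0:ℝ) ≤ M - cl (G s)), sq_nonneg σ₂]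
    · simp only [hfc]
      nlinarith [mul_nonneg hA (sq_nonneg (cl (G s))), mul_nonneg hlam hc,
        mul_nonneg hA (by nlinarith : (0:ℝ) ≤ M^2)]
  have hlip : ∀ s x y, |fc s x - fc s y| ≤ K s * |x - y| := by
    intro s x y
    have hA := hA0 s
    have hkey : fc s x - fc s y = (cl y - cl x) * ((1/σ₁^2 + h s)*(cl x + cl y) + 2*lam) := by
      simp only [hfc]; ring
    rw [hkey, abs_mul]
    have h2 : |(1/σ₁^2 + h s)*(cl x + cl y) + 2*lam| = (1/σ₁^2 + h s)*(cl x + cl y) + 2*lam :=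
      abs_of_nonneg (by nlinarith [hcl0 x, hcl0 y])
    rw [h2]
    have h3 : |cl y - cl x| ≤ |x - y| := by rw [abs_sub_comm]; exact hcl_lip x y
    have h4 : (1/σ₁^2 + h s)*(cl x + cl y) + 2*lam ≤ K s := by
      have h5 : cl x + cl y ≤ 2*M := by linarith [hclM x, hclM y]
      simp only [hK]
      nlinarith
    calc |cl y - cl x| * ((1/σ₁^2 + h s)*(cl x + cl y) + 2*lam)
        ≤ |x - y| * K s :=
          mul_le_mul h3 h4 (by nlinarith [hcl0 x, hcl0 y]) (abs_nonneg _)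
      _ = K s * |x - y| := mul_comm _ _
  -- global solutions of the clamped equation
  have hGlob : ∀ T : ℝ, 0 ≤ T → ∃ g : ℝ → ℝ, Continuous g ∧
      ∀ t ∈ Icc 0 T, g t = γ₀ + ∫ s in (0:ℝ)..t, fc s (g s) := fun T hT =>
    global_exists hmeas hlip hK0 hKloc γ₀ hT
  have hsolex : ∀ T : ℝ, ∃ g : ℝ → ℝ, Continuous g ∧
      ∀ t ∈ Icc 0 (max T 0), g t = γ₀ + ∫ s in (0:ℝ)..t, fc s (g s) := fun T =>
    hGlob (max T 0) (le_max_right _ _)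
  set sol : ℝ → (ℝ → ℝ) := fun T => Classical.choose (hsolex T) with hsol
  have hsolc : ∀ T, Continuous (sol T) := fun T => (Classical.choose_spec (hsolex T)).1
  have hsolid : ∀ T, ∀ t ∈ Icc (0:ℝ) (max T 0),
      sol T t = γ₀ + ∫ s in (0:ℝ)..t, fc s (sol T s) := fun T =>
    (Classical.choose_spec (hsolex T)).2
  have hagree : ∀ T₁ T₂ t : ℝ, 0 ≤ t → t ≤ T₁ → t ≤ T₂ → sol T₁ t = sol T₂ t := by
    intro T₁ T₂ t h0 h1 h2
    refine sol_unique (γ₀ := γ₀) hmeas hlip hK0 hKloc h0 (hsolc T₁) (hsolc T₂) ?_ ?_ t ⟨h0, le_refl t⟩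
    · exact fun x hx => hsolid T₁ x ⟨hx.1, hx.2.trans (h1.trans (le_max_left _ _))⟩
    · exact fun x hx => hsolid T₂ x ⟨hx.1, hx.2.trans (h2.trans (le_max_left _ _))⟩
  set G : ℝ → ℝ := fun t => sol t t with hGdef
  have hGsol : ∀ T, 0 ≤ T → ∀ t ∈ Icc (0:ℝ) T, G t = sol T t := by
    intro T hT t ht
    exact hagree t T t ht.1 (le_refl t) ht.2
  have hGc : ContinuousOn G (Ici 0) := by
    intro t ht
    have h1 : ContinuousWithinAt (sol (t+1)) (Ici 0) t :=
      (hsolc (t+1)).continuousAt.continuousWithinAt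
    have ht0 : (0:ℝ) ≤ t := ht
    have ht1 : (0:ℝ) ≤ t + 1 := by linarith
    refine h1.congr_of_eventuallyEq ?_ (hGsol (t+1) ht1 t ⟨ht0, by linarith⟩)
    have hmem : (Ici (0:ℝ)) ∩ Iio (t+1) ∈ nhdsWithin t (Ici 0) :=
      Filter.inter_mem self_mem_nhdsWithin
        (mem_nhdsWithin_of_mem_nhds (Iio_mem_nhds (by linarith)))
    exact Filter.eventuallyEq_of_mem hmem (fun x hx => hGsol (t+1) ht1 x ⟨hx.1, hx.2.le⟩)
  -- bounds for sol T on [0, T]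
  have hbound : ∀ T, 0 ≤ T → ∀ t ∈ Icc (0:ℝ) T, 0 ≤ sol T t ∧ sol T t ≤ M := by
    intro T hT
    have hcont : ContinuousOn (sol T) (Icc 0 T) := (hsolc T).continuousOn
    have hFi : ∀ t ∈ Icc (0:ℝ) T, IntervalIntegrable (fun s => fc s (sol T s)) volume 0 t :=
      fun t _ => hmeas (sol T) (hsolc T) 0 t
    have hsol0 : sol T 0 = γ₀ := by
      have := hsolid T 0 ⟨le_refl 0, le_max_right _ _⟩
      simpa using this
    have hid' : ∀ t ∈ Icc (0:ℝ) T, sol T t = sol T 0 + ∫ s in (0:ℝ)..t, fc s (sol T s) := by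
      intro t ht2
      rw [hsol0]
      exact hsolid T t ⟨ht2.1, ht2.2.trans (le_max_left _ _)⟩
    have hlo : ∀ s ∈ Icc (0:ℝ) T, sol T s ≤ (0:ℝ) → 0 ≤ fc s (sol T s) := by
      intro s _ hs
      have hcc : cl (sol T s) = 0 := hcl_lo _ hs
      simp only [hfc, hcc]
      nlinarith [sq_nonneg σ₂]
    have hhi : ∀ s ∈ Icc (0:ℝ) T, M ≤ sol T s → fc s (sol T s) ≤ 0 := by
      intro s _ hs
      have hcc : cl (sol T s) = M := hcl_hi _ hs
      simp only [hfc, hcc]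
      nlinarith [mul_nonneg (h_nonneg s) (sq_nonneg M)]
    have hge := barrier_ge (b := 0) hT hcont (by rw [hsol0]; exact hγ₀) hFi hid' hlo
    have hle := barrier_le (b := M) hT hcont (by rw [hsol0]; exact hMγ₀) hFi hid' hhi
    exact fun t ht2 => ⟨hge t ht2, hle t ht2⟩
  have hGbdd : ∀ T, 0 ≤ T → ∀ t ∈ Icc (0:ℝ) T, 0 ≤ G t ∧ G t ≤ M := by
    intro T hT t ht2
    rw [hGsol T hT t ht2]
    exact hbound T hT t ht2
  -- PART 2 prep: nonnegativity of any solution in f-form; γzero facts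
  have hzc : ContinuousOn γzero (Ici 0) := fun x hx => (hγzero x hx).continuousWithinAt
  have hzFc : ∀ u : ℝ, ContinuousOn (fun s => f (γzero s) 0) (Icc 0 u) := by
    intro u
    have h1 : ContinuousOn γzero (Icc 0 u) := hzc.mono (fun x hx => hx.1)
    have h2 : ContinuousOn (fun s => -(1/σ₁^2 + 0) * (γzero s)^2 - 2*lam*(γzero s) + σ₂^2)
        (Icc 0 u) :=
      ((continuousOn_const.mul (h1.pow 2)).sub (continuousOn_const.mul h1)).add continuousOn_const
    exact h2.congr (fun s _ => hf (γzero s) 0)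
  have hzid : ∀ u : ℝ, 0 ≤ u → γzero u = γ₀ + ∫ s in (0:ℝ)..u, f (γzero s) 0 := by
    intro u hu
    have hint : IntervalIntegrable (fun s => f (γzero s) 0) volume 0 u := by
      apply ContinuousOn.intervalIntegrable
      rw [uIcc_of_le hu]
      exact hzFc u
    have hftc := intervalIntegral.integral_eq_sub_of_hasDeriv_right_of_le hu
      (hzc.mono (fun x hx => hx.1))
      (fun x hx => ((hγzero x hx.1.le).hasDerivAt (Ici_mem_nhds hx.1)).hasDerivWithinAt) hint
    rw [hγzero0] at hftc
    linarith
  -- main split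
  constructor
  · -- existence
    refine ⟨G, ?_, hGc, ?_⟩
    · have := hsolid 0 0 ⟨le_refl 0, le_max_right _ _⟩
      simpa using this
    · intro t ht
      have ht0 : (0:ℝ) ≤ t := ht
      have hGeq : ∀ s ∈ Icc (0:ℝ) t, fc s (G s) = f (G s) (h s) := by
        intro s hs
        obtain ⟨hb1, hb2⟩ := hGbdd t ht0 s hs
        have := hcl_id (G s) hb1 hb2
        simp only [hfc, this, hf (G s) (h s)]
      constructor
      · have hi := hmeas (sol t) (hsolc t) 0 t
        rw [intervalIntegrable_iff] at hi ⊢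
        refine hi.congr ?_
        refine (ae_restrict_mem measurableSet_uIoc).mono (fun x hx => ?_)
        rw [uIoc_of_le ht0] at hx
        have hxI : x ∈ Icc (0:ℝ) t := ⟨hx.1.le, hx.2⟩
        show fc x (sol t x) = f (G x) (h x)
        rw [← hGeq x hxI, hGsol t ht0 x hxI]
      · have h1 : G t = γ₀ + ∫ s in (0:ℝ)..t, fc s (G s) := by
          rw [hGsol t ht0 t ⟨ht0, le_refl t⟩, hsolid t t ⟨ht0, le_max_left _ _⟩]
          congr 1
          refine integral_congr (fun s hs => ?_)
          rw [uIcc_of_le ht0] at hs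
          show fc s (sol t s) = fc s (G s)
          rw [hGsol t ht0 s hs]
        rw [h1]
        congr 1
        refine integral_congr (fun s hs => ?_)
        rw [uIcc_of_le ht0] at hs
        exact hGeq s hs
  · -- universal bounds
    rintro g ⟨hg0, hgc, hgint⟩ t ht
    have ht0 : (0:ℝ) ≤ t := ht
    have hgcI : ContinuousOn g (Icc 0 t) := hgc.mono (fun x hx => hx.1)
    have hfe : (fun s => -(1/σ₁^2 + h s) * (g s)^2 - 2*lam*(g s) + σ₂^2)
        = (fun s => f (g s) (h s)) := funext fun s => (hf _ _).symm
    have hpos_g : ∀ u ∈ Icc (0:ℝ) t, 0 ≤ g u := by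
      refine sol_nonneg (σ₂ := σ₂) ha0.le hlam h_nonneg h_locint ht0 hgcI (by rw [hg0]; exact hγ₀) ?_ ?_
      · intro u hu
        rw [show (fun s => -(1/σ₁^2 + h s) * (g s)^2 - 2*lam*(g s) + σ₂^2)
          = (fun s => f (g s) (h s)) from hfe]
        exact (hgint u hu.1).1
      · intro u hu
        have e1 : (∫ s in (0:ℝ)..u, (-(1/σ₁^2 + h s) * (g s)^2 - 2*lam*(g s) + σ₂^2))
            = ∫ s in (0:ℝ)..u, f (g s) (h s) :=
          integral_congr (fun s _ => (hf (g s) (h s)).symm)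
        rw [e1, hg0]
        exact (hgint u hu.1).2
    have hfe0 : (fun s => -(1/σ₁^2 + (0:ℝ)) * (γzero s)^2 - 2*lam*(γzero s) + σ₂^2)
        = (fun s => f (γzero s) 0) := funext fun s => (hf _ _).symm
    have hzint : ∀ u ∈ Icc (0:ℝ) t, IntervalIntegrable (fun s => f (γzero s) 0) volume 0 u := by
      intro u hu
      apply ContinuousOn.intervalIntegrable
      rw [uIcc_of_le hu.1]
      exact hzFc u
    have hzpos : ∀ u ∈ Icc (0:ℝ) t, 0 ≤ γzero u := by
      refine sol_nonneg (a := 1/σ₁^2) (σ₂ := σ₂) (hh := fun _ => (0:ℝ)) ha0.le hlam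
        (fun _ => le_refl 0) (locallyIntegrable_const 0) ht0
        (hzc.mono (fun x hx => hx.1)) (by rw [hγzero0]; exact hγ₀) ?_ ?_
      · intro u hu
        rw [show (fun s => -(1/σ₁^2 + (0:ℝ)) * (γzero s)^2 - 2*lam*(γzero s) + σ₂^2)
          = (fun s => f (γzero s) 0) from hfe0]
        exact hzint u hu
      · intro u hu
        have e1 : (∫ s in (0:ℝ)..u, (-(1/σ₁^2 + (0:ℝ)) * (γzero s)^2 - 2*lam*(γzero s) + σ₂^2))
            = ∫ s in (0:ℝ)..u, f (γzero s) 0 :=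
          integral_congr (fun s _ => (hf (γzero s) 0).symm)
        rw [e1, hγzero0]
        exact hzid u hu.1
    have hzid' : ∀ u ∈ Icc (0:ℝ) t, γzero u = γzero 0 + ∫ s in (0:ℝ)..u, f (γzero s) 0 := by
      intro u hu
      rw [hγzero0]
      exact hzid u hu.1
    have hzleM : ∀ u ∈ Icc (0:ℝ) t, γzero u ≤ M := by
      refine barrier_le ht0 (hzc.mono (fun x hx => hx.1)) (by rw [hγzero0]; exact hMγ₀)
        hzint hzid' ?_
      intro s _ hs
      rw [hf]
      nlinarith [mul_nonneg (sub_nonneg.2 hs) (by linarith : (0:ℝ) ≤ γzero s + M),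
        hMroot, mul_nonneg hlam (sub_nonneg.2 hs)]
    have hcomp : ∀ u ∈ Icc (0:ℝ) t, g u ≤ γzero u := by
      have hwid : ∀ u ∈ Icc (0:ℝ) t, (fun s => γzero s - g s) u
          = (fun s => γzero s - g s) 0
            + ∫ s in (0:ℝ)..u, (f (γzero s) 0 - f (g s) (h s)) := by
        intro u hu
        have e1 := hzid' u hu
        have e2 := (hgint u hu.1).2
        show γzero u - g u = (γzero 0 - g 0)
          + ∫ s in (0:ℝ)..u, (f (γzero s) 0 - f (g s) (h s))
        rw [integral_sub (hzint u hu) (hgint u hu.1).1]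
        linarith [e1, e2, hγzero0, hg0]
      have hwF : ∀ s ∈ Icc (0:ℝ) t, (fun s => γzero s - g s) s ≤ (0:ℝ) →
          0 ≤ f (γzero s) 0 - f (g s) (h s) := by
        intro s hs hws
        have hz0 := hzpos s hs
        have hgge : γzero s ≤ g s := by
          have hws' : γzero s - g s ≤ 0 := hws
          linarith
        rw [hf, hf]
        nlinarith [mul_nonneg (h_nonneg s) (sq_nonneg (g s)),
          mul_nonneg hlam (sub_nonneg.2 hgge),
          mul_nonneg (sub_nonneg.2 hgge) (by linarith : (0:ℝ) ≤ g s + γzero s)]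
      have hw := barrier_ge (g := fun s => γzero s - g s)
        (F := fun s => f (γzero s) 0 - f (g s) (h s)) (d := t) (b := 0) ht0
        ((hzc.mono (fun x hx => hx.1)).sub hgcI)
        (by show (0:ℝ) ≤ γzero 0 - g 0; rw [hγzero0, hg0]; simp)
        (fun u hu => (hzint u hu).sub (hgint u hu.1).1)
        hwid hwF
      intro u hu
      have hwu : (0:ℝ) ≤ γzero u - g u := hw u hu
      linarith
    refine ⟨hpos_g t ⟨ht0, le_refl t⟩, hcomp t ⟨ht0, le_refl t⟩, hzleM t ⟨ht0, le_refl t⟩⟩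
end

section
/- Let κ, ρ, δ > 0 and λ ≥ 0, and define a₁ := −δρ/4 + √(δ²ρ² + 4κρ)/4, a₃ := 2a₁ρ/(δρ + λρ + 2a₁), a₂ := a₃(2ρ − a₃)/(2ρ(2λ + δ)). Then 4a₁a₂ − a₃² > 0; consequently, since a₁ > 0, the symmetric 2×2 matrix A with entries A₁₁ = 2a₁, A₁₂ = A₂₁ = a₃, A₂₂ = 2a₂ is positive definite. -/
/-- With the explicit coefficients a₁, a₂, a₃, one has 4a₁a₂ − a₃² > 0,
and hence (since a₁ > 0) the Hessian matrix A = [[2a₁, a₃], [a₃, 2a₂]] is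
positive definite. -/
theorem stmt_4 (κ ρ δ lam : ℝ) (hκ : 0 < κ) (hρ : 0 < ρ) (hδ : 0 < δ) (hlam : 0 ≤ lam)
    (a₁ a₂ a₃ : ℝ)
    (ha₁ : a₁ = -(δ * ρ) / 4 + Real.sqrt (δ ^ 2 * ρ ^ 2 + 4 * κ * ρ) / 4)
    (ha₃ : a₃ = 2 * a₁ * ρ / (δ * ρ + lam * ρ + 2 * a₁))
    (ha₂ : a₂ = a₃ * (2 * ρ - a₃) / (2 * ρ * (2 * lam + δ))) :
    0 < 4 * a₁ * a₂ - a₃ ^ 2 ∧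
    (!![2 * a₁, a₃; a₃, 2 * a₂] : Matrix (Fin 2) (Fin 2) ℝ).PosDef := by
  have hs0 : (0:ℝ) ≤ δ ^ 2 * ρ ^ 2 + 4 * κ * ρ := by positivity
  have hsq : Real.sqrt (δ ^ 2 * ρ ^ 2 + 4 * κ * ρ) ^ 2 = δ ^ 2 * ρ ^ 2 + 4 * κ * ρ :=
    Real.sq_sqrt hs0
  have hsgt : δ * ρ < Real.sqrt (δ ^ 2 * ρ ^ 2 + 4 * κ * ρ) := by
    have hnn : (0:ℝ) ≤ Real.sqrt (δ ^ 2 * ρ ^ 2 + 4 * κ * ρ) := Real.sqrt_nonneg _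
    nlinarith
  have ha₁pos : 0 < a₁ := by rw [ha₁]; linarith
  have hD : 0 < δ * ρ + lam * ρ + 2 * a₁ := by positivity
  have hE : 0 < 2 * lam + δ := by linarith
  have ha₃pos : 0 < a₃ := by rw [ha₃]; positivity
  have hdet : 0 < 4 * a₁ * a₂ - a₃ ^ 2 := by
    have key : 4 * a₁ * a₂ - a₃ ^ 2 =
        2 * a₁ * a₃ * (δ * ρ + 2 * a₁) / ((δ * ρ + lam * ρ + 2 * a₁) * (2 * lam + δ)) := by
      rw [ha₂, ha₃]
      field_simp
      ring
    rw [key]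
    positivity
  refine ⟨hdet, ?_, ?_⟩
  · ext i j
    fin_cases i <;> fin_cases j <;> simp [Matrix.conjTranspose_apply]
  · intro x hx
    have hq : (x.sum fun i xi ↦ x.sum fun j xj ↦
          star xi * (!![2 * a₁, a₃; a₃, 2 * a₂] : Matrix (Fin 2) (Fin 2) ℝ) i j * xj) =
        2 * a₁ * (x 0) ^ 2 + 2 * a₃ * (x 0) * (x 1) + 2 * a₂ * (x 1) ^ 2 := by
      simp [Finsupp.sum_fintype, Fin.sum_univ_two]
      ring
    rw [hq]
    rcases eq_or_ne (x 1) 0 with h1 | h1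
    · have h0 : x 0 ≠ 0 := by
        intro h0
        apply hx
        ext i; fin_cases i <;> simp [h0, h1]
      have h0' : 0 < (x 0) ^ 2 := by positivity
      rw [h1]
      nlinarith [mul_pos ha₁pos h0']
    · have h1' : 0 < (x 1) ^ 2 := by positivity
      nlinarith [sq_nonneg (2 * a₁ * x 0 + a₃ * x 1), mul_pos hdet h1', mul_pos ha₁pos ha₁pos]
end

section
/- There exists a unique γ_eq ∈ [0, γ∞⁰] such that f(γ_eq, H*(γ_eq)) = 0; moreover f(γ, H*(γ)) > 0 for all γ ∈ [0, γ_eq) and f(γ, H*(γ)) < 0 for all γ ∈ (γ_eq, γ_max]. -/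
set_option maxHeartbeats 1000000


/-- There exists a unique γ_eq ∈ [0, γ∞⁰] with f(γ_eq, H*(γ_eq)) = 0;
moreover f(γ, H*(γ)) > 0 on [0, γ_eq) and f(γ, H*(γ)) < 0 on (γ_eq, γ_max]. -/
theorem stmt_16
    (σ₁ σ₂ lam δ abar γmax hmax : ℝ)
    (hσ₁ : 0 < σ₁) (hσ₂ : 0 ≤ σ₂) (hlam : 0 ≤ lam) (hδ : 0 < δ) (habar : 0 < abar)
    (f : ℝ → ℝ → ℝ)
    (hf : ∀ γ h : ℝ, f γ h = -(1 / σ₁ ^ 2 + h) * γ ^ 2 - 2 * lam * γ + σ₂ ^ 2)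
    (γinf : ℝ)
    (hγinf : γinf = -lam * σ₁ ^ 2 + Real.sqrt (lam ^ 2 * σ₁ ^ 4 + σ₁ ^ 2 * σ₂ ^ 2))
    (hγmax : γinf < γmax)
    (c c' : ℝ → ℝ)
    (hc_nonneg : ∀ x : ℝ, 0 ≤ x → 0 ≤ c x)
    (hc_conv : StrictConvexOn ℝ (Set.Ici 0) c)
    (hc_mono : StrictMonoOn c (Set.Ici 0))
    (hc_smooth : ContDiffOn ℝ 2 c (Set.Ici 0))
    (hc_deriv : ∀ x ∈ Set.Ici (0 : ℝ), HasDerivWithinAt c (c' x) (Set.Ici 0) x)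
    (hhmax : 0 < hmax) (hc_hmax : c' hmax = γmax ^ 2 * (abar / δ))
    (Adm : (ℝ → ℝ) → Prop)
    (hAdm : ∀ h : ℝ → ℝ, Adm h ↔ Measurable h ∧ ∀ t : ℝ, h t ∈ Set.Icc 0 hmax)
    (sol : (ℝ → ℝ) → ℝ → ℝ → ℝ)
    (hsol : ∀ h : ℝ → ℝ, Adm h → ∀ γ₀ ∈ Set.Icc (0 : ℝ) γmax,
      sol h γ₀ 0 = γ₀ ∧
      ContinuousOn (sol h γ₀) (Set.Ici 0) ∧
      (∀ t ∈ Set.Ici (0 : ℝ), sol h γ₀ t ∈ Set.Icc 0 γmax) ∧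
      (∀ t ∈ Set.Ici (0 : ℝ),
        sol h γ₀ t = γ₀ + ∫ s in (0 : ℝ)..t, f (sol h γ₀ s) (h s)))
    (J : (ℝ → ℝ) → ℝ → ℝ)
    (hJ : ∀ (h : ℝ → ℝ) (γ₀ : ℝ), J h γ₀ =
      ∫ t in Set.Ioi (0 : ℝ), Real.exp (-δ * t) * (abar * sol h γ₀ t + c (h t)))
    (v : ℝ → ℝ)
    (hv : ∀ γ₀ ∈ Set.Icc (0 : ℝ) γmax,
      v γ₀ = sInf ((fun h => J h γ₀) '' {h : ℝ → ℝ | Adm h}))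
    (v' : ℝ → ℝ)
    (hv_conc : ConcaveOn ℝ (Set.Icc 0 γmax) v)
    (hv'_deriv : ∀ x ∈ Set.Ioo (0 : ℝ) γmax, HasDerivAt v (v' x) x)
    (hv'_cont : ContinuousOn v' (Set.Ioo 0 γmax))
    (hv'_zero : HasDerivWithinAt v (v' 0) (Set.Icc 0 γmax) 0)
    (hv'_gmax : HasDerivWithinAt v (v' γmax) (Set.Icc 0 γmax) γmax)
    (Hstar : ℝ → ℝ)
    (hHstar : ∀ γ ∈ Set.Icc (0 : ℝ) γmax,
      (γ ^ 2 * v' γ < c' 0 → Hstar γ = 0) ∧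
      (c' 0 ≤ γ ^ 2 * v' γ →
        Hstar γ ∈ Set.Icc (0 : ℝ) hmax ∧ c' (Hstar γ) = γ ^ 2 * v' γ))
    (hHstar_nonneg : ∀ γ ∈ Set.Icc (0 : ℝ) γmax, 0 ≤ Hstar γ)
    (hHstar_mono : MonotoneOn Hstar (Set.Icc 0 γmax)) :
    ∃ γeq ∈ Set.Icc (0 : ℝ) γinf,
      f γeq (Hstar γeq) = 0 ∧
      (∀ γ' ∈ Set.Icc (0 : ℝ) γinf, f γ' (Hstar γ') = 0 → γ' = γeq) ∧
      (∀ γ ∈ Set.Ico (0 : ℝ) γeq, 0 < f γ (Hstar γ)) ∧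
      (∀ γ ∈ Set.Ioc γeq γmax, f γ (Hstar γ) < 0) := by
  -- Basic positivity facts
  have hσ₁2 : (0:ℝ) < σ₁ ^ 2 := by positivity
  have ha : (0:ℝ) < 1 / σ₁ ^ 2 := by positivity
  set s : ℝ := Real.sqrt (lam ^ 2 * σ₁ ^ 4 + σ₁ ^ 2 * σ₂ ^ 2) with hs
  have hs_nonneg : 0 ≤ s := Real.sqrt_nonneg _
  have hs_sq : s ^ 2 = lam ^ 2 * σ₁ ^ 4 + σ₁ ^ 2 * σ₂ ^ 2 := Real.sq_sqrt (by positivity)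
  have hlσ : 0 ≤ lam * σ₁ ^ 2 := mul_nonneg hlam hσ₁2.le
  have hls_le : lam * σ₁ ^ 2 ≤ s := by
    refine le_of_pow_le_pow_left₀ two_ne_zero hs_nonneg ?_
    rw [hs_sq]
    nlinarith [sq_nonneg (σ₁ * σ₂)]
  have hγinf_nonneg : 0 ≤ γinf := by rw [hγinf]; linarith
  have hγinf_memmax : γinf ∈ Set.Icc (0:ℝ) γmax := ⟨hγinf_nonneg, hγmax.le⟩
  have hroot' : γinf ^ 2 + 2 * lam * σ₁ ^ 2 * γinf - σ₁ ^ 2 * σ₂ ^ 2 = 0 := by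
    rw [hγinf]; linear_combination hs_sq
  have hroot : (1 / σ₁ ^ 2) * γinf ^ 2 + 2 * lam * γinf = σ₂ ^ 2 := by
    field_simp
    linear_combination hroot'
  -- strict decrease of γ ↦ f γ (Hstar γ)
  have hHnn : ∀ γ ∈ Set.Icc (0:ℝ) γmax, 0 ≤ Hstar γ := hHstar_nonneg
  have hSD : ∀ x ∈ Set.Icc (0:ℝ) γmax, ∀ y ∈ Set.Icc (0:ℝ) γmax, x < y →
      f y (Hstar y) < f x (Hstar x) := by
    intro x hx y hy hxy
    rw [hf, hf]
    have h1 : Hstar x ≤ Hstar y := hHstar_mono hx hy hxy.le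
    have h2 : 0 ≤ Hstar x := hHnn x hx
    have hx0 : 0 ≤ x := hx.1
    have hy0 : 0 < y := lt_of_le_of_lt hx0 hxy
    have hxy2 : x ^ 2 < y ^ 2 := by nlinarith
    nlinarith [mul_nonneg (sub_nonneg.2 h1) (sq_nonneg y),
      mul_lt_mul_of_pos_left hxy2 (lt_of_lt_of_le ha (by linarith : 1/σ₁^2 ≤ 1/σ₁^2 + Hstar x)),
      mul_nonneg hlam (sub_nonneg.2 hxy.le)]
  -- strict monotonicity of c'
  have hc'_mono : StrictMonoOn c' (Set.Ici 0) := by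
    intro x hx y hy hxy
    exact (hc_conv.lt_slope_of_hasDerivWithinAt hx hy hxy (hc_deriv x hx)).trans
      (hc_conv.slope_lt_of_hasDerivWithinAt hx hy hxy (hc_deriv y hy))
  -- c' ∘ Hstar equals max
  have hcH : ∀ γ ∈ Set.Icc (0:ℝ) γmax, c' (Hstar γ) = max (γ ^ 2 * v' γ) (c' 0) := by
    intro γ hγ
    rcases lt_or_ge (γ ^ 2 * v' γ) (c' 0) with h | h
    · rw [(hHstar γ hγ).1 h, max_eq_right h.le]
    · rw [((hHstar γ hγ).2 h).2, max_eq_left h]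
  have hHle : ∀ γ ∈ Set.Icc (0:ℝ) γmax, Hstar γ ≤ hmax := by
    intro γ hγ
    rcases lt_or_ge (γ ^ 2 * v' γ) (c' 0) with h | h
    · rw [(hHstar γ hγ).1 h]; exact hhmax.le
    · exact ((hHstar γ hγ).2 h).1.2
  rcases eq_or_lt_of_le hσ₂ with hσ₂0 | hσ₂pos
  · -- Case σ₂ = 0 : γinf = 0
    have hγinf0 : γinf = 0 := by
      have h1 : lam ^ 2 * σ₁ ^ 4 + σ₁ ^ 2 * σ₂ ^ 2 = (lam * σ₁ ^ 2) ^ 2 := by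
        rw [← hσ₂0]; ring
      rw [hγinf, hs, h1, Real.sqrt_sq hlσ]; ring
    refine ⟨0, ⟨le_refl 0, hγinf0.ge⟩, ?_, ?_, ?_, ?_⟩
    · rw [hf, ← hσ₂0]; ring
    · intro γ' hγ' _
      exact le_antisymm (hγinf0 ▸ hγ'.2) hγ'.1
    · intro γ hγ
      exact absurd hγ.2 (not_lt.2 hγ.1)
    · intro γ hγ
      rw [hf, ← hσ₂0]
      have hγmem : γ ∈ Set.Icc (0:ℝ) γmax := ⟨hγ.1.le, hγ.2⟩
      have hH := hHnn γ hγmem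
      nlinarith [mul_pos ha (pow_pos hγ.1 2), mul_nonneg hH (sq_nonneg γ),
        mul_nonneg hlam hγ.1.le]
  · -- Case 0 < σ₂
    have hγinfpos : 0 < γinf := by
      have : lam * σ₁ ^ 2 < s := by
        refine lt_of_pow_lt_pow_left₀ 2 hs_nonneg ?_
        rw [hs_sq]
        nlinarith [mul_pos hσ₁2 (mul_pos hσ₂pos hσ₂pos)]
      rw [hγinf]; linarith
    set T : Set ℝ := {γ | γ ∈ Set.Icc (0:ℝ) γinf ∧ 0 ≤ f γ (Hstar γ)} with hT
    have hF0 : f 0 (Hstar 0) = σ₂ ^ 2 := by rw [hf]; ring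
    have h0T : (0:ℝ) ∈ T := ⟨⟨le_refl 0, hγinfpos.le⟩, by rw [hF0]; positivity⟩
    have hTne : T.Nonempty := ⟨0, h0T⟩
    have hTbdd : BddAbove T := ⟨γinf, fun γ hγ => hγ.1.2⟩
    set γeq : ℝ := sSup T with hγeq
    have hγeq_mem : γeq ∈ Set.Icc (0:ℝ) γinf :=
      ⟨le_csSup hTbdd h0T, csSup_le hTne (fun γ hγ => hγ.1.2)⟩
    have hγeq_memmax : γeq ∈ Set.Icc (0:ℝ) γmax :=
      ⟨hγeq_mem.1, le_trans hγeq_mem.2 hγmax.le⟩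
    have hγeq_ltmax : γeq < γmax := lt_of_le_of_lt hγeq_mem.2 hγmax
    -- positivity on [0, γeq)
    have hpos : ∀ γ ∈ Set.Ico (0:ℝ) γeq, 0 < f γ (Hstar γ) := by
      intro γ hγ
      obtain ⟨γ'', hγ''T, hlt⟩ := exists_lt_of_lt_csSup hTne hγ.2
      have h1 := hSD γ ⟨hγ.1, le_trans (le_trans hγ.2.le hγeq_mem.2) hγmax.le⟩
        γ'' ⟨hγ''T.1.1, le_trans hγ''T.1.2 hγmax.le⟩ hlt
      exact lt_of_le_of_lt hγ''T.2 h1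
    have hFinf_le : f γinf (Hstar γinf) ≤ 0 := by
      rw [hf]
      have hH := hHnn γinf hγinf_memmax
      nlinarith [mul_nonneg hH (sq_nonneg γinf)]
    -- negativity on (γeq, γmax]
    have hneg : ∀ γ ∈ Set.Ioc γeq γmax, f γ (Hstar γ) < 0 := by
      intro γ hγ
      have hγ0 : 0 ≤ γ := le_trans hγeq_mem.1 hγ.1.le
      rcases le_or_gt γ γinf with hle | hgt
      · by_contra hcon
        push_neg at hcon
        have : γ ≤ γeq := le_csSup hTbdd ⟨⟨hγ0, hle⟩, hcon⟩
        linarith [hγ.1]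
      · exact lt_of_lt_of_le (hSD γinf hγinf_memmax γ ⟨hγ0, hγ.2⟩ hgt) hFinf_le
    -- γeq > 0
    have hγeqpos : 0 < γeq := by
      set B : ℝ := (1 / σ₁ ^ 2 + hmax) * γinf + 2 * lam + 1 with hB
      have hBpos : 0 < B := by positivity
      set t : ℝ := min γinf (σ₂ ^ 2 / B) with ht
      have htpos : 0 < t := lt_min hγinfpos (by positivity)
      have ht1 : t ≤ γinf := min_le_left _ _
      have ht2 : t ≤ σ₂ ^ 2 / B := min_le_right _ _
      have ht2' : B * t ≤ σ₂ ^ 2 := by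
        rw [← le_div_iff₀' hBpos]; exact ht2
      have htmem : t ∈ Set.Icc (0:ℝ) γmax := ⟨htpos.le, le_trans ht1 hγmax.le⟩
      have ht3 : ((1 / σ₁ ^ 2 + hmax) * γinf + 2 * lam + 1) * t ≤ σ₂ ^ 2 := by
        rw [← hB]; exact ht2'
      have hFt : 0 ≤ f t (Hstar t) := by
        rw [hf]
        have h1 : Hstar t ≤ hmax := hHle t htmem
        have h2 : 0 ≤ Hstar t := hHnn t htmem
        nlinarith [mul_nonneg (sub_nonneg.2 h1) (sq_nonneg t),
          mul_nonneg (mul_nonneg (by positivity : (0:ℝ) ≤ 1 / σ₁ ^ 2 + hmax) htpos.le)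
            (sub_nonneg.2 ht1), ht3, htpos]
      have : t ≤ γeq := le_csSup hTbdd ⟨⟨htpos.le, ht1⟩, hFt⟩
      linarith
    -- continuity at γeq
    have hγmaxpos : 0 < γmax := lt_trans hγinfpos hγmax
    have hv'at : ContinuousAt v' γeq :=
      hv'_cont.continuousAt (Ioo_mem_nhds hγeqpos hγeq_ltmax)
    have hm_cont : ContinuousAt (fun γ : ℝ => max (γ ^ 2 * v' γ) (c' 0)) γeq :=
      ((continuousAt_id.pow 2).mul hv'at).max continuousAt_const
    set b : ℝ := Hstar γeq with hb
    have hb0 : 0 ≤ b := hHnn γeq hγeq_memmax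
    have hmγeq : max (γeq ^ 2 * v' γeq) (c' 0) = c' b := (hcH γeq hγeq_memmax).symm
    -- ε-δ continuity estimate for Hstar at γeq
    have hH_cont : ∀ ε : ℝ, 0 < ε → ∃ d : ℝ, 0 < d ∧ ∀ γ ∈ Set.Icc (0:ℝ) γmax,
        |γ - γeq| < d → |Hstar γ - b| < ε := by
      intro ε hε
      have hub : c' b < c' (b + ε) :=
        hc'_mono (Set.mem_Ici.2 hb0) (Set.mem_Ici.2 (by linarith)) (by linarith)
      obtain ⟨d₁, hd₁pos, hball₁⟩ :=
        Metric.continuousAt_iff.1 hm_cont (c' (b + ε) - c' b) (by linarith)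
      have key₁ : ∀ γ ∈ Set.Icc (0:ℝ) γmax, |γ - γeq| < d₁ → Hstar γ < b + ε := by
        intro γ hγm hclose
        have h1 := hball₁ (show dist γ γeq < d₁ by rwa [Real.dist_eq])
        simp only [Real.dist_eq, hmγeq] at h1
        have h2 : max (γ ^ 2 * v' γ) (c' 0) < c' (b + ε) := by
          have h1' := abs_lt.1 h1
          linarith [h1'.1, h1'.2]
        rw [← hcH γ hγm] at h2
        by_contra hcon
        push_neg at hcon
        exact absurd h2 (not_lt.2 (hc'_mono.monotoneOn (Set.mem_Ici.2 (by linarith))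
          (Set.mem_Ici.2 (hHnn γ hγm)) hcon))
      rcases lt_or_ge b ε with hbe | hbe
      · refine ⟨d₁, hd₁pos, fun γ hγm hclose => ?_⟩
        have h1 := key₁ γ hγm hclose
        have h2 : 0 ≤ Hstar γ := hHnn γ hγm
        rw [abs_lt]; constructor <;> linarith
      · have hlb : c' (b - ε) < c' b :=
          hc'_mono (Set.mem_Ici.2 (by linarith)) (Set.mem_Ici.2 hb0) (by linarith)
        obtain ⟨d₂, hd₂pos, hball₂⟩ :=
          Metric.continuousAt_iff.1 hm_cont (c' b - c' (b - ε)) (by linarith)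
        refine ⟨min d₁ d₂, lt_min hd₁pos hd₂pos, fun γ hγm hclose => ?_⟩
        have h1 := key₁ γ hγm (lt_of_lt_of_le hclose (min_le_left _ _))
        have h3 := hball₂ (show dist γ γeq < d₂ by
          rw [Real.dist_eq]; exact lt_of_lt_of_le hclose (min_le_right _ _))
        simp only [Real.dist_eq, hmγeq] at h3
        have h4 : c' (b - ε) < max (γ ^ 2 * v' γ) (c' 0) := by
          have h3' := abs_lt.1 h3
          linarith [h3'.1, h3'.2]
        rw [← hcH γ hγm] at h4
        have h5 : b - ε < Hstar γ := by
          by_contra hcon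
          push_neg at hcon
          exact absurd h4 (not_lt.2 (hc'_mono.monotoneOn (Set.mem_Ici.2 (hHnn γ hγm))
            (Set.mem_Ici.2 (by linarith)) hcon))
        rw [abs_lt]; constructor <;> linarith
    -- the key equality
    have hFeq : f γeq (Hstar γeq) = 0 := by
      rw [← hb]
      rcases lt_trichotomy (f γeq b) 0 with hlt | heq | hgt
      · exfalso
        obtain ⟨E, hE⟩ : ∃ x : ℝ, x = -(f γeq b) := ⟨_, rfl⟩
        have hEpos : 0 < E := by rw [hE]; linarith
        have h2 : -(1 / σ₁ ^ 2 + b) * γeq ^ 2 - 2 * lam * γeq + σ₂ ^ 2 = -E := by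
          rw [hE, hf]; ring
        obtain ⟨ε, hε⟩ : ∃ x : ℝ, x = E / (2 * (γmax ^ 2 + 1)) := ⟨_, rfl⟩
        have hεpos : 0 < ε := by rw [hε]; exact div_pos hEpos (by positivity)
        have hεE : ε * (γmax ^ 2 + 1) = E / 2 := by rw [hε]; field_simp
        obtain ⟨d, hdpos, hd⟩ := hH_cont ε hεpos
        obtain ⟨C, hC⟩ : ∃ x : ℝ, x = (1 / σ₁ ^ 2 + b) * 2 * γmax + 2 * lam + 1 := ⟨_, rfl⟩
        have hCpos : 0 < C := by
          have h1 : (0:ℝ) ≤ (1 / σ₁ ^ 2 + b) * 2 * γmax :=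
            mul_nonneg (mul_nonneg (by linarith) (by norm_num)) hγmaxpos.le
          have h2 : (0:ℝ) ≤ 2 * lam := by linarith
          rw [hC]; linarith
        obtain ⟨t, htdef⟩ : ∃ x : ℝ, x = min (γeq / 2) (min (d / 2) (E / (4 * C))) := ⟨_, rfl⟩
        have htpos : 0 < t := by
          rw [htdef]
          exact lt_min (by linarith) (lt_min (by linarith) (div_pos hEpos (by linarith)))
        have ht1 : t ≤ γeq / 2 := by rw [htdef]; exact min_le_left _ _
        have ht2 : t ≤ d / 2 := by
          rw [htdef]; exact le_trans (min_le_right _ _) (min_le_left _ _)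
        have htC : t * C ≤ E / 4 := by
          have h' : t ≤ E / 4 / C := by
            rw [div_div, htdef]; exact le_trans (min_le_right _ _) (min_le_right _ _)
          exact (le_div_iff₀ hCpos).1 h'
        obtain ⟨γ, hγdef⟩ : ∃ x : ℝ, x = γeq - t := ⟨_, rfl⟩
        have hγmem : γ ∈ Set.Icc (0:ℝ) γmax :=
          ⟨by rw [hγdef]; linarith, by rw [hγdef]; linarith⟩
        have hHb := hd γ hγmem (by rw [hγdef]; rw [abs_lt]; constructor <;> linarith)
        have hHlow : b - ε < Hstar γ := by
          have h' := abs_lt.1 hHb; linarith [h'.1]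
        have hFγpos : 0 < f γ (Hstar γ) := hpos γ ⟨hγmem.1, by rw [hγdef]; linarith⟩
        rw [hf] at hFγpos
        have hq1 : γeq ^ 2 - γ ^ 2 ≤ 2 * γmax * t := by
          have h1 : γeq ^ 2 - γ ^ 2 = t * (2 * γeq - t) := by rw [hγdef]; ring
          have h2 : 2 * γeq - t ≤ 2 * γmax := by linarith [hγeq_memmax.2]
          have h3 : t * (2 * γeq - t) ≤ t * (2 * γmax) :=
            mul_le_mul_of_nonneg_left h2 htpos.le
          rw [h1]; linarith [h3]
        have hq1' : (1 / σ₁ ^ 2 + b) * (γeq ^ 2 - γ ^ 2) ≤ (1 / σ₁ ^ 2 + b) * (2 * γmax * t) :=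
          mul_le_mul_of_nonneg_left hq1 (by linarith)
        have hq2 : ε * γ ^ 2 ≤ E / 2 := by
          rw [← hεE]
          refine mul_le_mul_of_nonneg_left ?_ hεpos.le
          have := pow_le_pow_left₀ hγmem.1 hγmem.2 2
          linarith [this]
        have hq3 : (b - ε) * γ ^ 2 ≤ Hstar γ * γ ^ 2 :=
          mul_le_mul_of_nonneg_right hHlow.le (sq_nonneg γ)
        have hq4 : (1 / σ₁ ^ 2 + b) * (2 * γmax * t) + 2 * lam * t + t = C * t := by
          rw [hC]; ring
        have hq5 : 2 * lam * γ + 2 * lam * t = 2 * lam * γeq := by rw [hγdef]; ring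
        linarith [hq1', hq2, hq3, hq4, hq5, htC, hEpos, htpos, h2, hFγpos]
      · exact heq
      · exfalso
        have hlt' : γeq < γinf := by
          rcases lt_or_eq_of_le hγeq_mem.2 with h | h
          · exact h
          · exfalso; rw [hb, h] at hgt; linarith [hFinf_le]
        obtain ⟨E, hE⟩ : ∃ x : ℝ, x = f γeq b := ⟨_, rfl⟩
        have hEpos : 0 < E := by rw [hE]; exact hgt
        have h2 : -(1 / σ₁ ^ 2 + b) * γeq ^ 2 - 2 * lam * γeq + σ₂ ^ 2 = E := by
          rw [hE, hf]
        obtain ⟨ε, hε⟩ : ∃ x : ℝ, x = E / (2 * (γmax ^ 2 + 1)) := ⟨_, rfl⟩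
        have hεpos : 0 < ε := by rw [hε]; exact div_pos hEpos (by positivity)
        have hεE : ε * (γmax ^ 2 + 1) = E / 2 := by rw [hε]; field_simp
        obtain ⟨d, hdpos, hd⟩ := hH_cont ε hεpos
        obtain ⟨C, hC⟩ : ∃ x : ℝ, x = (1 / σ₁ ^ 2 + b) * 2 * γmax + 2 * lam + 1 := ⟨_, rfl⟩
        have hCpos : 0 < C := by
          have h1 : (0:ℝ) ≤ (1 / σ₁ ^ 2 + b) * 2 * γmax :=
            mul_nonneg (mul_nonneg (by linarith) (by norm_num)) hγmaxpos.le
          have h2 : (0:ℝ) ≤ 2 * lam := by linarith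
          rw [hC]; linarith
        obtain ⟨t, htdef⟩ : ∃ x : ℝ, x = min ((γinf - γeq) / 2) (min (d / 2) (E / (4 * C))) := ⟨_, rfl⟩
        have htpos : 0 < t := by
          rw [htdef]
          exact lt_min (by linarith) (lt_min (by linarith) (div_pos hEpos (by linarith)))
        have ht1 : t ≤ (γinf - γeq) / 2 := by rw [htdef]; exact min_le_left _ _
        have ht2 : t ≤ d / 2 := by
          rw [htdef]; exact le_trans (min_le_right _ _) (min_le_left _ _)
        have htC : t * C ≤ E / 4 := by
          have h' : t ≤ E / 4 / C := by
            rw [div_div, htdef]; exact le_trans (min_le_right _ _) (min_le_right _ _)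
          exact (le_div_iff₀ hCpos).1 h'
        obtain ⟨γ, hγdef⟩ : ∃ x : ℝ, x = γeq + t := ⟨_, rfl⟩
        have hγleinf : γ ≤ γinf := by rw [hγdef]; linarith
        have hγmem : γ ∈ Set.Icc (0:ℝ) γmax :=
          ⟨by rw [hγdef]; linarith [hγeq_mem.1], le_trans hγleinf hγmax.le⟩
        have hHb := hd γ hγmem (by rw [hγdef]; rw [abs_lt]; constructor <;> linarith)
        have hHhigh : Hstar γ < b + ε := by
          have h' := abs_lt.1 hHb; linarith [h'.2]
        have hq1 : γ ^ 2 - γeq ^ 2 ≤ 2 * γmax * t := by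
          have h1 : γ ^ 2 - γeq ^ 2 = t * (2 * γeq + t) := by rw [hγdef]; ring
          have h2 : 2 * γeq + t ≤ 2 * γmax := by
            linarith [hγeq_memmax.2, hγinf_memmax.2, ht1]
          have h3 : t * (2 * γeq + t) ≤ t * (2 * γmax) :=
            mul_le_mul_of_nonneg_left h2 htpos.le
          rw [h1]; linarith [h3]
        have hq1' : (1 / σ₁ ^ 2 + b) * (γ ^ 2 - γeq ^ 2) ≤ (1 / σ₁ ^ 2 + b) * (2 * γmax * t) :=
          mul_le_mul_of_nonneg_left hq1 (by linarith)
        have hq2 : ε * γ ^ 2 ≤ E / 2 := by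
          rw [← hεE]
          refine mul_le_mul_of_nonneg_left ?_ hεpos.le
          have := pow_le_pow_left₀ hγmem.1 hγmem.2 2
          linarith [this]
        have hq3 : Hstar γ * γ ^ 2 ≤ (b + ε) * γ ^ 2 :=
          mul_le_mul_of_nonneg_right hHhigh.le (sq_nonneg γ)
        have hq4 : (1 / σ₁ ^ 2 + b) * (2 * γmax * t) + 2 * lam * t + t = C * t := by
          rw [hC]; ring
        have hq5 : 2 * lam * γ = 2 * lam * γeq + 2 * lam * t := by rw [hγdef]; ring
        have hFγ : 0 ≤ f γ (Hstar γ) := by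
          rw [hf]
          linarith [hq1', hq2, hq3, hq4, hq5, htC, hEpos, htpos, h2]
        have : γ ≤ γeq := le_csSup hTbdd ⟨⟨hγmem.1, hγleinf⟩, hFγ⟩
        rw [hγdef] at this; linarith
    refine ⟨γeq, hγeq_mem, hFeq, ?_, hpos, hneg⟩
    intro γ' hγ' hFγ'
    rcases lt_trichotomy γ' γeq with h | h | h
    · exact absurd hFγ' (ne_of_gt (hpos γ' ⟨hγ'.1, h⟩))
    · exact h
    · exact absurd hFγ' (ne_of_lt (hneg γ' ⟨h, le_trans hγ'.2 hγmax.le⟩))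
end

section
/- Let ζ > 0, ā > 0, δ > 0, λ ≥ 0, σ₁ > 0, σ₂ ≥ 0 and σ̄₁ := 1/σ₁. Suppose v : (0,∞) → [0,∞) is differentiable with v'(γ) > 0 for all γ > 0 and satisfies, for all γ > 0, the equation 0 = −(1/(4ζ))·γ⁴·v'(γ)² + (−σ̄₁² − 2λ/γ + σ₂²/γ²)·γ²·v'(γ) + ā·γ − δ·v(γ). Then v is bounded on (0,∞), lim_{γ→∞} γ^{3/2}·v'(γ) = 2·√(ζ·ā), and with H*(γ) := γ²·v'(γ)/(2ζ) one has lim_{γ→∞} H*(γ)/γ^{1/2} = √(ā)/√(ζ). -/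
open Filter Real


/-- Quadratic-cost asymptotics. If v > 0-differentiable with v' > 0
solves the HJB equation
0 = −(1/(4ζ))γ⁴v'(γ)² + (−σ̄₁² − 2λ/γ + σ₂²/γ²)γ²v'(γ) + āγ − δv(γ) on (0,∞),
then v is bounded, γ^{3/2}v'(γ) → 2√(ζā) as γ → ∞, and the feedback map
H*(γ) = γ²v'(γ)/(2ζ) satisfies H*(γ)/γ^{1/2} → √ā/√ζ as γ → ∞. -/
theorem stmt_19 (ζ abar δ lam σ₁ σ₂ : ℝ)
    (hζ : 0 < ζ) (habar : 0 < abar) (hδ : 0 < δ) (hlam : 0 ≤ lam)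
    (hσ₁ : 0 < σ₁) (hσ₂ : 0 ≤ σ₂)
    (v v' : ℝ → ℝ)
    (hv_nonneg : ∀ γ : ℝ, 0 < γ → 0 ≤ v γ)
    (hv_deriv : ∀ γ : ℝ, 0 < γ → HasDerivAt v (v' γ) γ)
    (hv'_pos : ∀ γ : ℝ, 0 < γ → 0 < v' γ)
    (hHJB : ∀ γ : ℝ, 0 < γ →
      0 = -(1 / (4 * ζ)) * γ ^ 4 * v' γ ^ 2 +
        (-(1 / σ₁ ^ 2) - 2 * lam / γ + σ₂ ^ 2 / γ ^ 2) * (γ ^ 2 * v' γ) +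
        abar * γ - δ * v γ) :
    (∃ M : ℝ, ∀ γ : ℝ, 0 < γ → |v γ| ≤ M) ∧
    Filter.Tendsto (fun γ : ℝ => γ ^ ((3 : ℝ) / 2) * v' γ) Filter.atTop
      (nhds (2 * Real.sqrt (ζ * abar))) ∧
    Filter.Tendsto (fun γ : ℝ => (γ ^ 2 * v' γ / (2 * ζ)) / γ ^ ((1 : ℝ) / 2))
      Filter.atTop (nhds (Real.sqrt abar / Real.sqrt ζ)) := by
  have hζ' : ζ ≠ 0 := hζ.ne'
  have hσ : σ₁ ≠ 0 := hσ₁.ne'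
  set s : ℝ := Real.sqrt (ζ * abar) with hs
  have hs_nn : 0 ≤ s := Real.sqrt_nonneg _
  set A : ℝ → ℝ := fun γ => 1 / σ₁ ^ 2 + 2 * lam / γ - σ₂ ^ 2 / γ ^ 2 with hA
  set γ₁ : ℝ := σ₁ * σ₂ + 1 with hγ₁def
  have hγ₁1 : (1:ℝ) ≤ γ₁ := by nlinarith
  have hγ₁pos : 0 < γ₁ := lt_of_lt_of_le one_pos hγ₁1
  -- A is nonnegative for γ ≥ γ₁
  have hAnn : ∀ γ : ℝ, γ₁ ≤ γ → 0 ≤ A γ := by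
    intro γ hγ
    have hγpos : 0 < γ := lt_of_lt_of_le hγ₁pos hγ
    have h1 : σ₂ ^ 2 / γ ^ 2 ≤ 1 / σ₁ ^ 2 := by
      rw [div_le_div_iff₀ (by positivity) (by positivity)]
      nlinarith
    have h2 : 0 ≤ 2 * lam / γ := by positivity
    simp only [hA]
    linarith
  -- key polynomial identity
  have hkey : ∀ γ : ℝ, 0 < γ →
      (γ ^ 2 * v' γ + 2 * ζ * A γ) ^ 2
        = 4 * (ζ ^ 2 * A γ ^ 2 + ζ * (abar * γ - δ * v γ)) := by
    intro γ hγ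
    have hγ' : γ ≠ 0 := hγ.ne'
    have h := hHJB γ hγ
    simp only [hA]
    have h4 : ζ * ζ⁻¹ = 1 := mul_inv_cancel₀ hζ'
    linear_combination (4 * ζ) * h - γ ^ 4 * v' γ ^ 2 * h4
  have hkey0 : ∀ γ : ℝ, 0 < γ →
      γ ^ 4 * v' γ ^ 2 + 4 * ζ * A γ * (γ ^ 2 * v' γ)
        = 4 * ζ * (abar * γ - δ * v γ) := by
    intro γ hγ
    linear_combination hkey γ hγ
  -- āγ - δv ≥ 0 and derivative bound for γ ≥ γ₁
  have hsub : ∀ γ : ℝ, γ₁ ≤ γ → 0 ≤ abar * γ - δ * v γ := by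
    intro γ hγ
    have hγpos : 0 < γ := lt_of_lt_of_le hγ₁pos hγ
    have h := hkey0 γ hγpos
    have hp := (hv'_pos γ hγpos).le
    have hAn := hAnn γ hγ
    nlinarith [sq_nonneg (v' γ), pow_pos hγpos 4, mul_nonneg (mul_nonneg (mul_nonneg (by norm_num : (0:ℝ) ≤ 4) hζ.le) hAn) (mul_nonneg (sq_nonneg γ) hp)]
  have hpbound : ∀ γ : ℝ, γ₁ ≤ γ → v' γ ^ 2 ≤ 4 * ζ * abar / γ ^ 3 := by
    intro γ hγ
    have hγpos : 0 < γ := lt_of_lt_of_le hγ₁pos hγ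
    have h := hkey0 γ hγpos
    have hAn := hAnn γ hγ
    have hvnn := hv_nonneg γ hγpos
    rw [le_div_iff₀ (by positivity)]
    nlinarith [mul_nonneg (mul_nonneg hζ.le hAn) (mul_nonneg (sq_nonneg γ) (hv'_pos γ hγpos).le), mul_nonneg (mul_nonneg hζ.le hδ.le) hvnn, hγpos, pow_pos hγpos 4, pow_pos hγpos 3]
  -- pointwise bound v' γ ≤ 2 s γ^{-3/2}
  have hp' : ∀ γ : ℝ, γ₁ ≤ γ → v' γ ≤ 2 * s * γ ^ (-(3:ℝ)/2) := by
    intro γ hγ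
    have hγpos : 0 < γ := lt_of_lt_of_le hγ₁pos hγ
    set q : ℝ := 2 * s * γ ^ (-(3:ℝ)/2) with hq
    have hqnn : 0 ≤ q := by positivity
    have hq2 : q ^ 2 = 4 * ζ * abar / γ ^ 3 := by
      have h1 : (γ ^ (-(3:ℝ)/2)) ^ 2 = γ ^ (-(3:ℝ)) := by
        rw [← Real.rpow_natCast (γ ^ (-(3:ℝ)/2)) 2, ← Real.rpow_mul hγpos.le]
        norm_num
      have h2 : γ ^ (-(3:ℝ)) = (γ ^ (3:ℕ))⁻¹ := by
        rw [Real.rpow_neg hγpos.le, show ((3:ℝ)) = ((3:ℕ):ℝ) by norm_num, Real.rpow_natCast]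
      have h3 : s ^ 2 = ζ * abar := Real.sq_sqrt (by positivity)
      rw [hq]
      rw [mul_pow, mul_pow, h1, h2, h3]
      ring
    calc v' γ = Real.sqrt (v' γ ^ 2) := (Real.sqrt_sq (hv'_pos γ hγpos).le).symm
      _ ≤ Real.sqrt (q ^ 2) := Real.sqrt_le_sqrt (by rw [hq2]; exact hpbound γ hγ)
      _ = q := Real.sqrt_sq hqnn
  -- boundedness of v
  set w : ℝ → ℝ := fun γ => v γ + 4 * s * γ ^ (-(1:ℝ)/2) with hw
  have hw_deriv : ∀ γ : ℝ, 0 < γ →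
      HasDerivAt w (v' γ - 2 * s * γ ^ (-(3:ℝ)/2)) γ := by
    intro γ hγ
    have h1 : HasDerivAt (fun x : ℝ => x ^ (-(1:ℝ)/2)) ((-(1:ℝ)/2) * γ ^ (-(1:ℝ)/2 - 1)) γ :=
      Real.hasDerivAt_rpow_const (Or.inl hγ.ne')
    have h2 : (-(1:ℝ)/2 - 1) = (-(3:ℝ)/2) := by norm_num
    rw [h2] at h1
    have := (hv_deriv γ hγ).add (h1.const_mul (4 * s))
    rw [show v' γ - 2 * s * γ ^ (-(3:ℝ)/2) = v' γ + 4 * s * ((-(1:ℝ)/2) * γ ^ (-(3:ℝ)/2)) by ring]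
    exact this
  have hmono : StrictMonoOn v (Set.Ioi (0:ℝ)) := by
    apply strictMonoOn_of_deriv_pos (convex_Ioi 0)
    · intro x hx
      exact (hv_deriv x hx).continuousAt.continuousWithinAt
    · intro x hx
      rw [interior_Ioi] at hx
      rw [(hv_deriv x hx).deriv]
      exact hv'_pos x hx
  have hanti : AntitoneOn w (Set.Ici γ₁) := by
    apply antitoneOn_of_deriv_nonpos (convex_Ici γ₁)
    · intro x hx
      exact (hw_deriv x (lt_of_lt_of_le hγ₁pos hx)).continuousAt.continuousWithinAt
    · intro x hx
      rw [interior_Ici] at hx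
      exact (hw_deriv x (lt_trans hγ₁pos hx)).differentiableAt.differentiableWithinAt
    · intro x hx
      rw [interior_Ici] at hx
      rw [(hw_deriv x (lt_trans hγ₁pos hx)).deriv]
      have := hp' x (le_of_lt hx)
      linarith
  set M : ℝ := v γ₁ + 4 * s * γ₁ ^ (-(1:ℝ)/2) with hM
  have hvM : ∀ γ : ℝ, 0 < γ → v γ ≤ M := by
    intro γ hγ
    rcases le_or_gt γ₁ γ with hc | hc
    · have h1 : v γ ≤ w γ := by
        have : 0 ≤ 4 * s * γ ^ (-(1:ℝ)/2) := by positivity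
        simp only [hw]; linarith
      have h2 : w γ ≤ w γ₁ := hanti (Set.self_mem_Ici) hc hc
      calc v γ ≤ w γ := h1
        _ ≤ w γ₁ := h2
        _ = M := rfl
    · have h1 : v γ ≤ v γ₁ := (hmono.monotoneOn hγ hγ₁pos) hc.le
      have : 0 ≤ 4 * s * γ₁ ^ (-(1:ℝ)/2) := by positivity
      simp only [hM]; linarith
  have hMnn : 0 ≤ M := le_trans (hv_nonneg γ₁ hγ₁pos) (hvM γ₁ hγ₁pos)
  have hbdd : ∃ M : ℝ, ∀ γ : ℝ, 0 < γ → |v γ| ≤ M :=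
    ⟨M, fun γ hγ => by rw [abs_of_nonneg (hv_nonneg γ hγ)]; exact hvM γ hγ⟩
  -- limit machinery
  have hv_div : Filter.Tendsto (fun γ : ℝ => v γ / γ) Filter.atTop (nhds 0) := by
    have hb : Filter.Tendsto (fun γ : ℝ => M / γ) Filter.atTop (nhds 0) :=
      tendsto_const_nhds.div_atTop tendsto_id
    apply squeeze_zero_norm' _ hb
    filter_upwards [eventually_ge_atTop γ₁] with γ hγ
    have hγpos : 0 < γ := lt_of_lt_of_le hγ₁pos hγ
    rw [Real.norm_eq_abs, abs_div, abs_of_nonneg (hv_nonneg γ hγpos), abs_of_pos hγpos]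
    gcongr
    exact hvM γ hγpos
  have hA_lim : Filter.Tendsto A Filter.atTop (nhds (1 / σ₁ ^ 2)) := by
    have h2 : Filter.Tendsto (fun γ : ℝ => 2 * lam / γ) Filter.atTop (nhds 0) :=
      tendsto_const_nhds.div_atTop tendsto_id
    have h3 : Filter.Tendsto (fun γ : ℝ => σ₂ ^ 2 / γ ^ 2) Filter.atTop (nhds 0) :=
      tendsto_const_nhds.div_atTop (tendsto_pow_atTop two_ne_zero)
    have hc : Filter.Tendsto (fun _ : ℝ => 1 / σ₁ ^ 2) Filter.atTop (nhds (1 / σ₁ ^ 2)) :=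
      tendsto_const_nhds
    have := (hc.add h2).sub h3
    simpa [hA] using this
  have hinv : Filter.Tendsto (fun γ : ℝ => γ⁻¹) Filter.atTop (nhds 0) := tendsto_inv_atTop_zero
  have hrpow : Filter.Tendsto (fun γ : ℝ => γ ^ (-(1:ℝ)/2)) Filter.atTop (nhds 0) := by
    have := tendsto_rpow_neg_atTop (y := (1:ℝ)/2) (by norm_num)
    simpa [neg_div] using this
  set F : ℝ → ℝ := fun γ =>
    2 * Real.sqrt (ζ ^ 2 * A γ ^ 2 / γ + ζ * abar - ζ * δ * (v γ / γ)) -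
      2 * ζ * A γ * γ ^ (-(1:ℝ)/2) with hF
  have hF_lim : Filter.Tendsto F Filter.atTop (nhds (2 * s)) := by
    have hinner : Filter.Tendsto
        (fun γ : ℝ => ζ ^ 2 * A γ ^ 2 / γ + ζ * abar - ζ * δ * (v γ / γ))
        Filter.atTop (nhds (ζ * abar)) := by
      have ht1 : Filter.Tendsto (fun γ : ℝ => ζ ^ 2 * A γ ^ 2 / γ) Filter.atTop (nhds 0) :=
        (((hA_lim.pow 2).const_mul (ζ ^ 2)).div_atTop tendsto_id)
      have ht2 : Filter.Tendsto (fun γ : ℝ => ζ * δ * (v γ / γ)) Filter.atTop (nhds 0) := by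
        simpa using hv_div.const_mul (ζ * δ)
      have hc : Filter.Tendsto (fun _ : ℝ => ζ * abar) Filter.atTop (nhds (ζ * abar)) :=
        tendsto_const_nhds
      have := (ht1.add hc).sub ht2
      simpa using this
    have hsq : Filter.Tendsto
        (fun γ : ℝ => Real.sqrt (ζ ^ 2 * A γ ^ 2 / γ + ζ * abar - ζ * δ * (v γ / γ)))
        Filter.atTop (nhds s) :=
      (Real.continuous_sqrt.tendsto (ζ * abar)).comp hinner
    have hsecond : Filter.Tendsto (fun γ : ℝ => 2 * ζ * A γ * γ ^ (-(1:ℝ)/2))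
        Filter.atTop (nhds 0) := by
      have := (hA_lim.const_mul (2 * ζ)).mul hrpow
      simpa [hA] using this
    have := (hsq.const_mul 2).sub hsecond
    simpa using this
  -- eventual equality with F
  have hsqrt4 : Real.sqrt 4 = 2 := by
    rw [show (4:ℝ) = 2 ^ 2 by norm_num, Real.sqrt_sq (by norm_num : (0:ℝ) ≤ 2)]
  have hEq : ∀ γ : ℝ, γ₁ ≤ γ → γ ^ ((3:ℝ)/2) * v' γ = F γ := by
    intro γ hγ
    have hγpos : 0 < γ := lt_of_lt_of_le hγ₁pos hγ
    have hγ' : γ ≠ 0 := hγpos.ne'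
    have hAn := hAnn γ hγ
    have hX : (0:ℝ) ≤ ζ ^ 2 * A γ ^ 2 + ζ * (abar * γ - δ * v γ) := by
      have := hsub γ hγ
      positivity
    have hLnn : 0 ≤ γ ^ 2 * v' γ + 2 * ζ * A γ := by
      have := (hv'_pos γ hγpos).le
      positivity
    have hstep1 : γ ^ 2 * v' γ + 2 * ζ * A γ
        = 2 * Real.sqrt (ζ ^ 2 * A γ ^ 2 + ζ * (abar * γ - δ * v γ)) := by
      calc γ ^ 2 * v' γ + 2 * ζ * A γ
          = Real.sqrt ((γ ^ 2 * v' γ + 2 * ζ * A γ) ^ 2) := (Real.sqrt_sq hLnn).symm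
        _ = Real.sqrt (4 * (ζ ^ 2 * A γ ^ 2 + ζ * (abar * γ - δ * v γ))) := by
            rw [hkey γ hγpos]
        _ = 2 * Real.sqrt (ζ ^ 2 * A γ ^ 2 + ζ * (abar * γ - δ * v γ)) := by
            rw [Real.sqrt_mul (by norm_num : (0:ℝ) ≤ 4), hsqrt4]
    have hsplit : γ ^ ((3:ℝ)/2) = γ ^ 2 * γ ^ (-(1:ℝ)/2) := by
      rw [← Real.rpow_natCast γ 2, ← Real.rpow_add hγpos]
      norm_num
    have hhalf : γ ^ (-(1:ℝ)/2) = Real.sqrt γ⁻¹ := by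
      rw [show (-(1:ℝ)/2) = -(1/2) by norm_num, Real.rpow_neg hγpos.le,
        ← Real.sqrt_eq_rpow, Real.sqrt_inv]
    have hsqrtdiv : Real.sqrt (ζ ^ 2 * A γ ^ 2 + ζ * (abar * γ - δ * v γ)) * γ ^ (-(1:ℝ)/2)
        = Real.sqrt (ζ ^ 2 * A γ ^ 2 / γ + ζ * abar - ζ * δ * (v γ / γ)) := by
      rw [hhalf, ← Real.sqrt_mul hX]
      congr 1
      field_simp
      ring
    calc γ ^ ((3:ℝ)/2) * v' γ = (γ ^ 2 * v' γ) * γ ^ (-(1:ℝ)/2) := by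
          rw [hsplit]; ring
      _ = (2 * Real.sqrt (ζ ^ 2 * A γ ^ 2 + ζ * (abar * γ - δ * v γ)) - 2 * ζ * A γ)
            * γ ^ (-(1:ℝ)/2) := by
          rw [show γ ^ 2 * v' γ = (γ ^ 2 * v' γ + 2 * ζ * A γ) - 2 * ζ * A γ by ring, hstep1]
      _ = 2 * (Real.sqrt (ζ ^ 2 * A γ ^ 2 + ζ * (abar * γ - δ * v γ)) * γ ^ (-(1:ℝ)/2))
            - 2 * ζ * A γ * γ ^ (-(1:ℝ)/2) := by ring
      _ = F γ := by rw [hsqrtdiv]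
  have hEqF : (fun γ : ℝ => γ ^ ((3:ℝ)/2) * v' γ) =ᶠ[Filter.atTop] F := by
    filter_upwards [eventually_ge_atTop γ₁] with γ hγ
    exact hEq γ hγ
  have hlim2 : Filter.Tendsto (fun γ : ℝ => γ ^ ((3:ℝ)/2) * v' γ) Filter.atTop (nhds (2 * s)) :=
    hF_lim.congr' hEqF.symm
  -- third limit
  have hval : 2 * s / (2 * ζ) = Real.sqrt abar / Real.sqrt ζ := by
    have hz : Real.sqrt ζ * Real.sqrt ζ = ζ := Real.mul_self_sqrt hζ.le
    have hzpos : 0 < Real.sqrt ζ := Real.sqrt_pos.mpr hζ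
    rw [hs, Real.sqrt_mul hζ.le]
    rw [div_eq_div_iff (by positivity) hzpos.ne']
    nlinarith [Real.sqrt_nonneg abar]
  have hEq3 : (fun γ : ℝ => (γ ^ 2 * v' γ / (2 * ζ)) / γ ^ ((1:ℝ)/2)) =ᶠ[Filter.atTop]
      (fun γ : ℝ => (γ ^ ((3:ℝ)/2) * v' γ) / (2 * ζ)) := by
    filter_upwards [eventually_ge_atTop γ₁] with γ hγ
    have hγpos : 0 < γ := lt_of_lt_of_le hγ₁pos hγ
    have hsplit : γ ^ ((3:ℝ)/2) = γ ^ 2 * γ ^ (-(1:ℝ)/2) := by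
      rw [← Real.rpow_natCast γ 2, ← Real.rpow_add hγpos]
      norm_num
    have hneg : γ ^ (-(1:ℝ)/2) = (γ ^ ((1:ℝ)/2))⁻¹ := by
      rw [show (-(1:ℝ)/2) = -((1:ℝ)/2) by norm_num, Real.rpow_neg hγpos.le]
    rw [hsplit, hneg]
    ring
  have hlim3 : Filter.Tendsto (fun γ : ℝ => (γ ^ 2 * v' γ / (2 * ζ)) / γ ^ ((1:ℝ)/2))
      Filter.atTop (nhds (Real.sqrt abar / Real.sqrt ζ)) := by
    have := (hlim2.div_const (2 * ζ)).congr' hEq3.symm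
    rwa [hval] at this
  exact ⟨hbdd, hlim2, hlim3⟩
end
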